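/- arXiv:2108.01345 — 4 statements merged into one kernel-verified Lean document; each statement's English description precedes it below -/
import Mathlib

section
/- Assume (A1). For every v : [n₀] → ℂ² one has ‖𝒦v‖² + ‖P₀v(0)‖²_{ℂ²} + ‖Q_{n₀}v(n₀)‖²_{ℂ²} = ‖v‖², where ‖·‖ is the ℓ²-norm on ℂ^{2(n₀+1)}. Consequently the operator norm of 𝒦 is at most 1. -/
open Complex Matrix

noncomputable section

/-- states: `ℂ²` -/
abbrev C2 : Type := Fin 2 → ℂ

/-- `P n = |L⟩⟨L| U n` -/
def Pmat (U : ℤ → Matrix (Fin 2) (Fin 2) ℂ) (n : ℤ) : Matrix (Fin 2) (Fin 2) ℂ :=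
  Matrix.of fun i j => if i = 0 then U n 0 j else 0

/-- `Q n = |R⟩⟨R| U n` -/
def Qmat (U : ℤ → Matrix (Fin 2) (Fin 2) ℂ) (n : ℤ) : Matrix (Fin 2) (Fin 2) ℂ :=
  Matrix.of fun i j => if i = 1 then U n 1 j else 0

/-- the time evolution operator `𝒰`: `(𝒰ψ)(n) = P_{n+1}ψ(n+1) + Q_{n-1}ψ(n-1)` -/
def QWop (U : ℤ → Matrix (Fin 2) (Fin 2) ℂ) (ψ : ℤ → C2) : ℤ → C2 :=
  fun n => (Pmat U (n + 1)).mulVec (ψ (n + 1)) + (Qmat U (n - 1)).mulVec (ψ (n - 1))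

/-- all local coins are unitary -/
def CoinsUnitary (U : ℤ → Matrix (Fin 2) (Fin 2) ℂ) : Prop :=
  ∀ n : ℤ, U n ∈ Matrix.unitaryGroup (Fin 2) ℂ

/-- Assumption (A1): `U n = I₂` outside `[n₀] = {0,…,n₀}` -/
def A1 (n0 : ℕ) (U : ℤ → Matrix (Fin 2) (Fin 2) ℂ) : Prop :=
  ∀ n : ℤ, n < 0 ∨ (n0 : ℤ) < n → U n = 1

/-- Assumption (A2): `a n ≠ 0` for all `n` -/
def A2 (U : ℤ → Matrix (Fin 2) (Fin 2) ℂ) : Prop :=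
  ∀ n : ℤ, U n 0 0 ≠ 0

/-- the restriction `𝒦` of `𝒰` to `ℓ²([n₀];ℂ²) ≅ ℂ^{2(n₀+1)}`, as a matrix:
`(𝒦v)(n) = P_{n+1}v(n+1) + Q_{n-1}v(n-1)` with the convention that out-of-range terms vanish. -/
def Kmat (n0 : ℕ) (U : ℤ → Matrix (Fin 2) (Fin 2) ℂ) :
    Matrix (Fin (n0 + 1) × Fin 2) (Fin (n0 + 1) × Fin 2) ℂ :=
  Matrix.of fun p q =>
    (if p.2 = 0 ∧ (q.1 : ℕ) = (p.1 : ℕ) + 1 then U (((p.1 : ℕ) : ℤ) + 1) 0 q.2 else 0) +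
    (if p.2 = 1 ∧ (q.1 : ℕ) + 1 = (p.1 : ℕ) then U ((q.1 : ℕ) : ℤ) 1 q.2 else 0)

/-- `μ` is an eigenvalue of `𝒦` -/
def HasEig (n0 : ℕ) (U : ℤ → Matrix (Fin 2) (Fin 2) ℂ) (μ : ℂ) : Prop :=
  ∃ v : Fin (n0 + 1) × Fin 2 → ℂ, v ≠ 0 ∧ (Kmat n0 U).mulVec v = μ • v

/-- the algebraic multiplicity of `μ` as an eigenvalue of `𝒦`:
`dim ker (𝒦 - μI)^{2(n₀+1)}` -/
def algMult (n0 : ℕ) (U : ℤ → Matrix (Fin 2) (Fin 2) ℂ) (μ : ℂ) : ℕ :=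
  Module.finrank ℂ
    (LinearMap.ker (Matrix.mulVecLin ((Kmat n0 U - μ • 1) ^ (2 * (n0 + 1)))))

/-- `ψ` solves the generalized eigenvalue equation `𝒰ψ = μψ` (pointwise on `ℤ`) -/
def IsSol (U : ℤ → Matrix (Fin 2) (Fin 2) ℂ) (μ : ℂ) (ψ : ℤ → C2) : Prop :=
  ∀ n : ℤ, QWop U ψ n = μ • ψ n

/-- the local transfer matrix `T n ξ` -/
def Tmat (U : ℤ → Matrix (Fin 2) (Fin 2) ℂ) (ξ : ℂ) (n : ℤ) : Matrix (Fin 2) (Fin 2) ℂ :=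
  !![Complex.exp (Complex.I * ξ) / (starRingEnd ℂ) (U n 0 0),
      -((starRingEnd ℂ) (U n 1 0)) / (starRingEnd ℂ) (U n 0 0);
    -(U n 1 0) / U n 1 1, Complex.exp (-(Complex.I * ξ)) / U n 1 1]

/-- the global transfer matrix `𝕋(ξ) = T₀(ξ)T₁(ξ)⋯T_{n₀}(ξ)` -/
def TT (n0 : ℕ) (U : ℤ → Matrix (Fin 2) (Fin 2) ℂ) (ξ : ℂ) : Matrix (Fin 2) (Fin 2) ℂ :=
  ((List.range (n0 + 1)).map fun k => Tmat U ξ (k : ℤ)).prod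

/-- the Wronskian-type determinant `𝒲_n(ψ₁,ψ₂) = det(Π_nψ₁, Π_nψ₂)` where
`Π_nψ = (⟨L|ψ(n)⟩, ⟨R|ψ(n+1)⟩)ᵀ` -/
def Wr (ψ₁ ψ₂ : ℤ → C2) (n : ℤ) : ℂ :=
  ψ₁ n 0 * ψ₂ (n + 1) 1 - ψ₂ n 0 * ψ₁ (n + 1) 1

/-- outgoing state -/
def Outgoing (n0 : ℕ) (ψ : ℤ → C2) : Prop :=
  ∀ n : ℕ, ψ (-(n : ℤ)) 1 = 0 ∧ ψ ((n0 : ℤ) + n) 0 = 0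

/-- member of `ℋ^out_N` -/
def OutgoingFrom (n0 : ℕ) (N : ℕ) (ψ : ℤ → C2) : Prop :=
  ∀ n : ℕ, N ≤ n → ψ (-(n : ℤ)) 1 = 0 ∧ ψ ((n0 : ℤ) + n) 0 = 0

/-- incoming state -/
def Incoming (n0 : ℕ) (φ : ℤ → C2) : Prop :=
  ∀ n : ℕ, φ (-(n : ℤ)) 0 = 0 ∧ φ ((n0 : ℤ) + n) 1 = 0

/-- the pairing `⟨φ, ψ⟩ = Σ_{n∈ℤ} (φ(n), ψ(n))_{ℂ²}` -/
def pairing (φ ψ : ℤ → C2) : ℂ :=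
  ∑' n : ℤ, ∑ i : Fin 2, (starRingEnd ℂ) (φ n i) * ψ n i

/-- restriction of a state to `[n₀]` -/
def resK (n0 : ℕ) (ψ : ℤ → C2) : Fin (n0 + 1) × Fin 2 → ℂ :=
  fun p => ψ ((p.1 : ℕ) : ℤ) p.2

/-- the Jost solution `ψ_out^-(·;ξ)`: solution equal to `e^{-inξ}|L⟩` for `n ≤ -1` -/
def JostOutMinus (U : ℤ → Matrix (Fin 2) (Fin 2) ℂ) (ξ : ℂ) (ψ : ℤ → C2) : Prop :=
  IsSol U (Complex.exp (-(Complex.I * ξ))) ψ ∧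
    ∀ n : ℤ, n ≤ -1 → ψ n = ![Complex.exp (-(Complex.I * (n : ℂ) * ξ)), 0]

/-- the Jost solution `ψ_out^+(·;ξ)`: solution equal to `e^{inξ}|R⟩` for `n ≥ n₀+1` -/
def JostOutPlus (n0 : ℕ) (U : ℤ → Matrix (Fin 2) (Fin 2) ℂ) (ξ : ℂ) (ψ : ℤ → C2) : Prop :=
  IsSol U (Complex.exp (-(Complex.I * ξ))) ψ ∧
    ∀ n : ℤ, (n0 : ℤ) + 1 ≤ n → ψ n = ![0, Complex.exp (Complex.I * (n : ℂ) * ξ)]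

/-- the Jost solution `ψ_in^-(·;ξ)`: solution equal to `e^{inξ}|R⟩` for `n ≤ -1` -/
def JostInMinus (U : ℤ → Matrix (Fin 2) (Fin 2) ℂ) (ξ : ℂ) (ψ : ℤ → C2) : Prop :=
  IsSol U (Complex.exp (-(Complex.I * ξ))) ψ ∧
    ∀ n : ℤ, n ≤ -1 → ψ n = ![0, Complex.exp (Complex.I * (n : ℂ) * ξ)]

/-- the Jost solution `ψ_in^+(·;ξ)`: solution equal to `e^{-inξ}|L⟩` for `n ≥ n₀+1` -/
def JostInPlus (n0 : ℕ) (U : ℤ → Matrix (Fin 2) (Fin 2) ℂ) (ξ : ℂ) (ψ : ℤ → C2) : Prop :=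
  IsSol U (Complex.exp (-(Complex.I * ξ))) ψ ∧
    ∀ n : ℤ, (n0 : ℤ) + 1 ≤ n → ψ n = ![Complex.exp (-(Complex.I * (n : ℂ) * ξ)), 0]


section AuxStmt0

lemma unitary_norm_sq (W : Matrix (Fin 2) (Fin 2) ℂ)
    (hW : W ∈ Matrix.unitaryGroup (Fin 2) ℂ) (w : Fin 2 → ℂ) :
    ∑ i, ‖W.mulVec w i‖ ^ 2 = ∑ i, ‖w i‖ ^ 2 := by
  have key : star (W.mulVec w) ⬝ᵥ (W.mulVec w) = star w ⬝ᵥ w := by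
    rw [Matrix.star_mulVec, ← dotProduct_mulVec, Matrix.mulVec_mulVec]
    have h1 : Wᴴ * W = 1 := by
      have := hW.1
      rwa [Matrix.star_eq_conjTranspose] at this
    rw [h1, Matrix.one_mulVec]
  have habs : ∀ u : Fin 2 → ℂ, ∑ i, ‖u i‖ ^ 2 = (star u ⬝ᵥ u).re := by
    intro u
    simp only [dotProduct, Pi.star_apply, Complex.star_def, Complex.re_sum]
    refine Finset.sum_congr rfl fun i _ => ?_
    rw [mul_comm, Complex.mul_conj]
    rw [Complex.normSq_eq_norm_sq]; norm_cast
  rw [habs, habs, key]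

variable {n0 : ℕ} {U : ℤ → Matrix (Fin 2) (Fin 2) ℂ} {v : Fin (n0 + 1) × Fin 2 → ℂ}

lemma Kv_last_zero : (Kmat n0 U).mulVec v (Fin.last n0, 0) = 0 := by
  simp only [Kmat, Matrix.mulVec, dotProduct, Matrix.of_apply]
  rw [Fintype.sum_prod_type]
  refine Finset.sum_eq_zero fun k _ => Finset.sum_eq_zero fun j _ => ?_
  have hk : (k : ℕ) ≠ (Fin.last n0 : ℕ) + 1 := by
    have := k.isLt; simp [Fin.val_last]; omega
  simp only [Fin.val_last] at hk
  simp [hk]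

lemma Kv_zero_one : (Kmat n0 U).mulVec v (0, 1) = 0 := by
  simp only [Kmat, Matrix.mulVec, dotProduct, Matrix.of_apply]
  rw [Fintype.sum_prod_type]
  refine Finset.sum_eq_zero fun k _ => Finset.sum_eq_zero fun j _ => ?_
  simp

lemma Kv_castSucc_zero (m : Fin n0) :
    (Kmat n0 U).mulVec v (m.castSucc, 0) =
      (U (((m : ℕ) : ℤ) + 1)).mulVec (fun j => v (m.succ, j)) 0 := by
  simp only [Kmat, Matrix.mulVec, dotProduct, Matrix.of_apply]
  rw [Fintype.sum_prod_type]
  rw [Finset.sum_eq_single m.succ]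
  · simp [Fin.val_succ, Fin.coe_castSucc]
  · intro k _ hk
    refine Finset.sum_eq_zero fun j _ => ?_
    have : (k : ℕ) ≠ (m.castSucc : ℕ) + 1 := by
      intro h; apply hk; apply Fin.ext; simp [Fin.val_succ, Fin.coe_castSucc] at h ⊢; omega
    simp only [Fin.coe_castSucc] at this
    simp [this]
  · simp

lemma Kv_succ_one (m : Fin n0) :
    (Kmat n0 U).mulVec v (m.succ, 1) =
      (U ((m : ℕ) : ℤ)).mulVec (fun j => v (m.castSucc, j)) 1 := by
  simp only [Kmat, Matrix.mulVec, dotProduct, Matrix.of_apply]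
  rw [Fintype.sum_prod_type]
  rw [Finset.sum_eq_single m.castSucc]
  · simp [Fin.val_succ, Fin.coe_castSucc]
  · intro k _ hk
    refine Finset.sum_eq_zero fun j _ => ?_
    have : (k : ℕ) + 1 ≠ (m.succ : ℕ) := by
      intro h; apply hk; apply Fin.ext; simp [Fin.val_succ, Fin.coe_castSucc] at h ⊢; omega
    have this' : (k : ℕ) ≠ (m : ℕ) := by simp [Fin.val_succ] at this; omega
    simp [this']
  · simp

lemma stmt0_main (n0 : ℕ) (U : ℤ → Matrix (Fin 2) (Fin 2) ℂ)
    (hU : CoinsUnitary U) :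
    ∀ v : Fin (n0 + 1) × Fin 2 → ℂ,
      (∑ p : Fin (n0 + 1) × Fin 2, ‖(Kmat n0 U).mulVec v p‖ ^ 2) +
        (∑ i : Fin 2, ‖(Pmat U 0).mulVec (fun j => v (0, j)) i‖ ^ 2) +
        (∑ i : Fin 2,
          ‖(Qmat U (n0 : ℤ)).mulVec (fun j => v (Fin.last n0, j)) i‖ ^ 2) =
        ∑ p : Fin (n0 + 1) × Fin 2, ‖v p‖ ^ 2 := by
  intro v
  set g0 : Fin (n0 + 1) → ℝ := fun m =>
    ‖(U ((m : ℕ) : ℤ)).mulVec (fun j => v (m, j)) 0‖ ^ 2 with hg0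
  set g1 : Fin (n0 + 1) → ℝ := fun m =>
    ‖(U ((m : ℕ) : ℤ)).mulVec (fun j => v (m, j)) 1‖ ^ 2 with hg1
  have hP : (∑ i : Fin 2, ‖(Pmat U 0).mulVec (fun j => v (0, j)) i‖ ^ 2)
      = g0 0 := by
    simp [hg0, Pmat, Matrix.mulVec, dotProduct, Fin.sum_univ_two]
  have hQ : (∑ i : Fin 2,
      ‖(Qmat U (n0 : ℤ)).mulVec (fun j => v (Fin.last n0, j)) i‖ ^ 2)
      = g1 (Fin.last n0) := by
    simp [hg1, Qmat, Matrix.mulVec, dotProduct, Fin.sum_univ_two]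
  have hK : (∑ p : Fin (n0 + 1) × Fin 2, ‖(Kmat n0 U).mulVec v p‖ ^ 2)
      = (∑ m : Fin n0, g0 m.succ) + (∑ m : Fin n0, g1 m.castSucc) := by
    rw [Fintype.sum_prod_type]
    simp only [Fin.sum_univ_two]
    rw [Finset.sum_add_distrib]
    congr 1
    · rw [Fin.sum_univ_castSucc]
      rw [Kv_last_zero]
      simp only [map_zero, norm_zero, ne_eq, OfNat.ofNat_ne_zero, not_false_eq_true, zero_pow, add_zero]
      refine Finset.sum_congr rfl fun m _ => ?_
      rw [Kv_castSucc_zero]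
      simp [hg0, Fin.val_succ]
    · rw [Fin.sum_univ_succ]
      rw [Kv_zero_one]
      simp only [map_zero, norm_zero, ne_eq, OfNat.ofNat_ne_zero, not_false_eq_true, zero_pow, zero_add]
      refine Finset.sum_congr rfl fun m _ => ?_
      rw [Kv_succ_one]
      simp [hg1, Fin.coe_castSucc]
  rw [hK, hP, hQ]
  have lhs_eq : ((∑ m : Fin n0, g0 m.succ) + (∑ m : Fin n0, g1 m.castSucc)) + g0 0
      + g1 (Fin.last n0)
      = (∑ m : Fin (n0+1), g0 m) + (∑ m : Fin (n0+1), g1 m) := by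
    rw [Fin.sum_univ_succ (f := g0), Fin.sum_univ_castSucc (f := g1)]
    ring
  rw [lhs_eq, ← Finset.sum_add_distrib, Fintype.sum_prod_type]
  refine Finset.sum_congr rfl fun m _ => ?_
  have := unitary_norm_sq (U ((m : ℕ) : ℤ)) (hU _) (fun j => v (m, j))
  rw [Fin.sum_univ_two, Fin.sum_univ_two] at this
  simpa [hg0, hg1] using this

end AuxStmt0

/-- the norm identity for `𝒦` and the bound `‖𝒦‖ ≤ 1`. -/
theorem stmt_0 (n0 : ℕ) (U : ℤ → Matrix (Fin 2) (Fin 2) ℂ)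
    (hU : CoinsUnitary U) (hA1 : A1 n0 U) :
    (∀ v : Fin (n0 + 1) × Fin 2 → ℂ,
      (∑ p : Fin (n0 + 1) × Fin 2, ‖(Kmat n0 U).mulVec v p‖ ^ 2) +
        (∑ i : Fin 2, ‖(Pmat U 0).mulVec (fun j => v (0, j)) i‖ ^ 2) +
        (∑ i : Fin 2,
          ‖(Qmat U (n0 : ℤ)).mulVec (fun j => v (Fin.last n0, j)) i‖ ^ 2) =
        ∑ p : Fin (n0 + 1) × Fin 2, ‖v p‖ ^ 2) ∧
    ∀ v : Fin (n0 + 1) × Fin 2 → ℂ,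
      Real.sqrt (∑ p : Fin (n0 + 1) × Fin 2, ‖(Kmat n0 U).mulVec v p‖ ^ 2) ≤
        Real.sqrt (∑ p : Fin (n0 + 1) × Fin 2, ‖v p‖ ^ 2) := by
  refine ⟨stmt0_main n0 U hU, fun v => ?_⟩
  apply Real.sqrt_le_sqrt
  have h := stmt0_main n0 U hU v
  have h1 : (0:ℝ) ≤ ∑ i : Fin 2, ‖(Pmat U 0).mulVec (fun j => v (0, j)) i‖ ^ 2 :=
    Finset.sum_nonneg fun i _ => by positivity
  have h2 : (0:ℝ) ≤ ∑ i : Fin 2,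
      ‖(Qmat U (n0 : ℤ)).mulVec (fun j => v (Fin.last n0, j)) i‖ ^ 2 :=
    Finset.sum_nonneg fun i _ => by positivity
  linarith
end
end

section
/- Assume (A1). The following three conditions are equivalent: (1) the set {n ∈ ℤ : a_n = 0} has at least two elements; (2) the unitary operator 𝒰 on ℓ²(ℤ;ℂ²) has an eigenvalue, i.e. there exist λ ∈ ℂ and a nonzero ψ ∈ ℓ²(ℤ;ℂ²) with 𝒰ψ = λψ; (3) the matrix 𝒦 has an eigenvalue of absolute value 1. -/
open Complex Matrix

noncomputable section

/-! ### Auxiliary lemmas -/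

section Aux

lemma col_rel (U : Matrix (Fin 2) (Fin 2) ℂ) (h : U ∈ Matrix.unitaryGroup (Fin 2) ℂ)
    (i j : Fin 2) :
    (starRingEnd ℂ) (U 0 i) * U 0 j + (starRingEnd ℂ) (U 1 i) * U 1 j
      = if i = j then 1 else 0 := by
  have h1 : star U * U = 1 := Matrix.UnitaryGroup.star_mul_self ⟨U, h⟩
  have := congrFun (congrFun h1 i) j
  simpa [Matrix.mul_apply, Fin.sum_univ_two, Matrix.one_apply, Matrix.star_apply,
    mul_comm] using this

lemma col_rel' (U : Matrix (Fin 2) (Fin 2) ℂ) (h : U ∈ Matrix.unitaryGroup (Fin 2) ℂ)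
    (i j : Fin 2) :
    U 0 i * (starRingEnd ℂ) (U 0 j) + U 1 i * (starRingEnd ℂ) (U 1 j)
      = if i = j then 1 else 0 := by
  have hcc := col_rel U h i j
  by_cases hij : i = j
  · subst hij
    rw [if_pos rfl] at hcc ⊢
    have h2 := congrArg (starRingEnd ℂ) hcc
    simp only [map_add, _root_.map_mul, Complex.conj_conj, _root_.map_one] at h2
    linear_combination h2
  · rw [if_neg hij] at hcc
    rw [if_neg hij]
    have h2 := congrArg (starRingEnd ℂ) hcc
    simp only [map_add, _root_.map_mul, Complex.conj_conj, _root_.map_zero] at h2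
    linear_combination h2

lemma row_rel (U : Matrix (Fin 2) (Fin 2) ℂ) (h : U ∈ Matrix.unitaryGroup (Fin 2) ℂ)
    (i j : Fin 2) :
    U i 0 * (starRingEnd ℂ) (U j 0) + U i 1 * (starRingEnd ℂ) (U j 1)
      = if i = j then 1 else 0 := by
  have h1 : U * star U = 1 := Matrix.mem_unitaryGroup_iff.mp h
  have := congrFun (congrFun h1 i) j
  simpa [Matrix.mul_apply, Fin.sum_univ_two, Matrix.one_apply, Matrix.star_apply] using this

lemma normSq_a_eq_d (U : Matrix (Fin 2) (Fin 2) ℂ) (h : U ∈ Matrix.unitaryGroup (Fin 2) ℂ) :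
    Complex.normSq (U 0 0) = Complex.normSq (U 1 1) := by
  have hr := row_rel U h 0 0
  have hc := col_rel U h 1 1
  simp only [if_pos rfl] at hr hc
  have : (Complex.normSq (U 0 0) : ℂ) = (Complex.normSq (U 1 1) : ℂ) := by
    have e1 := Complex.mul_conj (U 0 0)
    have e2 := Complex.mul_conj (U 1 1)
    have e3 : (starRingEnd ℂ) (U 0 1) * U 0 1 = U 0 1 * (starRingEnd ℂ) (U 0 1) := mul_comm _ _
    have e4 : (starRingEnd ℂ) (U 1 1) * U 1 1 = U 1 1 * (starRingEnd ℂ) (U 1 1) := mul_comm _ _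
    rw [if_pos trivial] at hr hc
    linear_combination (hr - hc) + e3 + e4 - e1 + e2
  exact_mod_cast this

lemma d_eq_zero (U : Matrix (Fin 2) (Fin 2) ℂ) (h : U ∈ Matrix.unitaryGroup (Fin 2) ℂ)
    (ha : U 0 0 = 0) : U 1 1 = 0 := by
  have := normSq_a_eq_d U h
  rw [ha] at this
  simp only [map_zero] at this
  exact Complex.normSq_eq_zero.mp this.symm

lemma mulVec_normSq (U : Matrix (Fin 2) (Fin 2) ℂ) (h : U ∈ Matrix.unitaryGroup (Fin 2) ℂ)
    (x : Fin 2 → ℂ) :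
    Complex.normSq (U.mulVec x 0) + Complex.normSq (U.mulVec x 1)
      = Complex.normSq (x 0) + Complex.normSq (x 1) := by
  have g00 := col_rel' U h 0 0
  have g01 := col_rel' U h 0 1
  have g10 := col_rel' U h 1 0
  have g11 := col_rel' U h 1 1
  simp only [if_pos rfl, if_true, if_neg (by decide : (0:Fin 2) ≠ 1),
    if_neg (by decide : (1:Fin 2) ≠ 0)] at g00 g01 g10 g11
  have : (Complex.normSq (U.mulVec x 0) + Complex.normSq (U.mulVec x 1) : ℂ)
      = (Complex.normSq (x 0) + Complex.normSq (x 1) : ℂ) := by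
    push_cast
    rw [← Complex.mul_conj, ← Complex.mul_conj, ← Complex.mul_conj, ← Complex.mul_conj]
    simp only [Matrix.mulVec, dotProduct, Fin.sum_univ_two, map_add, _root_.map_mul]
    linear_combination (x 0 * (starRingEnd ℂ) (x 0)) * g00 + (x 0 * (starRingEnd ℂ) (x 1)) * g01
      + (x 1 * (starRingEnd ℂ) (x 0)) * g10 + (x 1 * (starRingEnd ℂ) (x 1)) * g11
  exact_mod_cast this

lemma mulVec_eq_zero (U : Matrix (Fin 2) (Fin 2) ℂ) (h : U ∈ Matrix.unitaryGroup (Fin 2) ℂ)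
    (x : Fin 2 → ℂ) (hx : U.mulVec x = 0) : x = 0 := by
  have h1 : star U * U = 1 := Matrix.UnitaryGroup.star_mul_self ⟨U, h⟩
  have : (star U * U).mulVec x = (star U).mulVec (U.mulVec x) := (Matrix.mulVec_mulVec _ _ _).symm
  rw [h1, hx, Matrix.mulVec_zero, Matrix.one_mulVec] at this
  exact this

lemma C2_ext {x : C2} (h0 : x 0 = 0) (h1 : x 1 = 0) : x = 0 := by
  funext i
  fin_cases i <;> assumption

lemma mulVec_comp0 (A : Matrix (Fin 2) (Fin 2) ℂ) (x : C2) :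
    A.mulVec x 0 = A 0 0 * x 0 + A 0 1 * x 1 := by
  simp [Matrix.mulVec, dotProduct, Fin.sum_univ_two]

lemma mulVec_comp1 (A : Matrix (Fin 2) (Fin 2) ℂ) (x : C2) :
    A.mulVec x 1 = A 1 0 * x 0 + A 1 1 * x 1 := by
  simp [Matrix.mulVec, dotProduct, Fin.sum_univ_two]

lemma qwop_apply0 (U : ℤ → Matrix (Fin 2) (Fin 2) ℂ) (ψ : ℤ → C2) (n : ℤ) :
    QWop U ψ n 0 = (U (n + 1)).mulVec (ψ (n + 1)) 0 := by
  simp [QWop, Pmat, Qmat, Matrix.mulVec, dotProduct, Fin.sum_univ_two]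

lemma qwop_apply1 (U : ℤ → Matrix (Fin 2) (Fin 2) ℂ) (ψ : ℤ → C2) (n : ℤ) :
    QWop U ψ n 1 = (U (n - 1)).mulVec (ψ (n - 1)) 1 := by
  simp [QWop, Pmat, Qmat, Matrix.mulVec, dotProduct, Fin.sum_univ_two]

lemma sol_compL {U : ℤ → Matrix (Fin 2) (Fin 2) ℂ} {μ : ℂ} {ψ : ℤ → C2}
    (h : IsSol U μ ψ) (k : ℤ) :
    (U k).mulVec (ψ k) 0 = μ * ψ (k - 1) 0 := by
  have := congrFun (h (k - 1)) 0
  rw [qwop_apply0] at this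
  simpa using this

lemma sol_compR {U : ℤ → Matrix (Fin 2) (Fin 2) ℂ} {μ : ℂ} {ψ : ℤ → C2}
    (h : IsSol U μ ψ) (k : ℤ) :
    (U k).mulVec (ψ k) 1 = μ * ψ (k + 1) 1 := by
  have := congrFun (h (k + 1)) 1
  rw [qwop_apply1] at this
  simpa using this

/-! ### Part (1) → (2): trapped states -/

/-- `QWop` as a linear map -/
def QWlin (U : ℤ → Matrix (Fin 2) (Fin 2) ℂ) : (ℤ → C2) →ₗ[ℂ] (ℤ → C2) where
  toFun := QWop U
  map_add' ψ φ := by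
    funext n i
    simp only [QWop, Pi.add_apply, Matrix.mulVec_add]
    ring
  map_smul' c ψ := by
    funext n i
    simp only [QWop, Pi.smul_apply, Matrix.mulVec_smul, RingHom.id_apply, Pi.add_apply,
      smul_eq_mul]
    ring

/-- the trapped subspace between two vanishing diagonal entries -/
def trapSpace (n m : ℤ) : Submodule ℂ (ℤ → C2) where
  carrier := {ψ | (∀ k : ℤ, k < n ∨ m < k → ψ k = 0) ∧ ψ n 1 = 0 ∧ ψ m 0 = 0}
  add_mem' := by
    rintro ψ φ ⟨h1, h2, h3⟩ ⟨g1, g2, g3⟩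
    refine ⟨fun k hk => ?_, ?_, ?_⟩ <;> simp [h1, g1, h2, g2, h3, g3, *]
  zero_mem' := by simp
  smul_mem' := by
    rintro c ψ ⟨h1, h2, h3⟩
    refine ⟨fun k hk => ?_, ?_, ?_⟩ <;> simp [h1, h2, h3, *]

lemma trap_invariant {U : ℤ → Matrix (Fin 2) (Fin 2) ℂ} (hU : CoinsUnitary U)
    {n m : ℤ} (hnm : n < m) (han : U n 0 0 = 0) (ham : U m 0 0 = 0) :
    ∀ ψ ∈ trapSpace n m, QWop U ψ ∈ trapSpace n m := by
  rintro ψ ⟨h1, h2, h3⟩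
  have hdm : U m 1 1 = 0 := d_eq_zero (U m) (hU m) ham
  refine ⟨fun k hk => ?_, ?_, ?_⟩
  · rcases hk with hk | hk
    · refine C2_ext ?_ ?_
      · rw [qwop_apply0]
        rcases lt_or_eq_of_le (by omega : k + 1 ≤ n) with h | h
        · rw [h1 _ (Or.inl h), Matrix.mulVec_zero]; rfl
        · rw [h, mulVec_comp0, han, h2]; ring
      · rw [qwop_apply1, h1 _ (Or.inl (by omega)), Matrix.mulVec_zero]; rfl
    · refine C2_ext ?_ ?_
      · rw [qwop_apply0, h1 _ (Or.inr (by omega)), Matrix.mulVec_zero]; rfl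
      · rw [qwop_apply1]
        rcases lt_or_eq_of_le (by omega : m ≤ k - 1) with h | h
        · rw [h1 _ (Or.inr h), Matrix.mulVec_zero]; rfl
        · rw [← h, mulVec_comp1, hdm, h3]; ring
  · rw [qwop_apply1, h1 _ (Or.inl (by omega)), Matrix.mulVec_zero]; rfl
  · rw [qwop_apply0, h1 _ (Or.inr (by omega)), Matrix.mulVec_zero]; rfl

instance fdTrap (n m : ℤ) : FiniteDimensional ℂ (trapSpace n m) := by
  let L : trapSpace n m →ₗ[ℂ] ({k : ℤ // k ∈ Finset.Icc n m} → C2) :=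
    { toFun := fun ψ => fun k => ψ.1 k.1
      map_add' := fun ψ φ => rfl
      map_smul' := fun c ψ => rfl }
  apply FiniteDimensional.of_injective L
  intro ψ φ h
  apply Subtype.ext
  funext k
  by_cases hk : k ∈ Finset.Icc n m
  · exact congrFun h ⟨k, hk⟩
  · rw [ψ.2.1 k (by rw [Finset.mem_Icc] at hk; omega),
      φ.2.1 k (by rw [Finset.mem_Icc] at hk; omega)]

lemma trap_nontrivial {n m : ℤ} (hnm : n < m) : Nontrivial (trapSpace n m) := by
  refine ⟨⟨⟨fun k => if k = n then (fun i => if i = 0 then 1 else 0) else 0, ?_⟩, 0, ?_⟩⟩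
  · refine ⟨fun k hk => ?_, ?_, ?_⟩
    · have hkn : k ≠ n := by omega
      simp [hkn]
    · simp
    · have hmn : m ≠ n := by omega
      simp [hmn]
  · intro h
    have := congrFun (congrFun (congrArg Subtype.val h) n) 0
    simp at this

lemma trap_eig {U : ℤ → Matrix (Fin 2) (Fin 2) ℂ} (hU : CoinsUnitary U)
    {n m : ℤ} (hnm : n < m) (han : U n 0 0 = 0) (ham : U m 0 0 = 0) :
    ∃ (μ : ℂ) (ψ : ℤ → C2), ψ ≠ 0 ∧ (∀ k : ℤ, k < n ∨ m < k → ψ k = 0) ∧ IsSol U μ ψ := by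
  have : Nontrivial (trapSpace n m) := trap_nontrivial hnm
  have hinv : ∀ x ∈ trapSpace n m, QWlin U x ∈ trapSpace n m :=
    trap_invariant hU hnm han ham
  set E : Module.End ℂ (trapSpace n m) := (QWlin U).restrict hinv with hE
  obtain ⟨μ, hμ⟩ := Module.End.exists_eigenvalue E
  obtain ⟨x, hx⟩ := hμ.exists_hasEigenvector
  refine ⟨μ, x.1, fun h => hx.2 (Subtype.ext h), x.2.1, ?_⟩
  have := hx.apply_eq_smul
  have hval : QWop U x.1 = μ • (x.1 : ℤ → C2) := congrArg Subtype.val this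
  intro k
  exact congrFun hval k

/-! ### tsum machinery -/

lemma tail_zero {f : ℤ → ℝ} (hf : Summable f) (h0 : ∀ n, 0 ≤ f n) (c d : ℤ) (hd : d ≠ 0)
    (hc : ∀ j : ℕ, f (c + d * j) = f c) : f c = 0 := by
  by_contra hne
  have hpos : 0 < f c := lt_of_le_of_ne (h0 c) (Ne.symm hne)
  obtain ⟨N, hN⟩ := exists_nat_gt ((∑' n, f n) / f c)
  have he : Function.Injective (fun j : ℕ => c + d * j) := by
    intro a b hab
    simp only at hab
    have h2 : d * a = d * b := by omega
    have := mul_left_cancel₀ hd h2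
    exact_mod_cast this
  have hle : ∑ k ∈ (Finset.range N).map ⟨_, he⟩, f k ≤ ∑' n, f n :=
    Summable.sum_le_tsum _ (fun i _ => h0 i) hf
  rw [Finset.sum_map] at hle
  simp only [Function.Embedding.coeFn_mk, hc] at hle
  rw [Finset.sum_const, Finset.card_range, nsmul_eq_mul] at hle
  have : (N : ℝ) ≤ (∑' n, f n) / f c := (le_div_iff₀ hpos).mpr hle
  linarith

lemma qwop_norm {U : ℤ → Matrix (Fin 2) (Fin 2) ℂ} (hU : CoinsUnitary U) (ψ : ℤ → C2)
    (hsum : Summable fun n => Complex.normSq (ψ n 0) + Complex.normSq (ψ n 1)) :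
    ∑' n : ℤ, (Complex.normSq (QWop U ψ n 0) + Complex.normSq (QWop U ψ n 1))
      = ∑' n : ℤ, (Complex.normSq (ψ n 0) + Complex.normSq (ψ n 1)) := by
  set A : ℤ → ℝ := fun n => Complex.normSq ((U n).mulVec (ψ n) 0) with hA
  set B : ℤ → ℝ := fun n => Complex.normSq ((U n).mulVec (ψ n) 1) with hB
  have hAB : ∀ n, A n + B n = Complex.normSq (ψ n 0) + Complex.normSq (ψ n 1) :=
    fun n => mulVec_normSq _ (hU n) _
  have hsA : Summable A := hsum.of_nonneg_of_le (fun n => Complex.normSq_nonneg _)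
      (fun n => by rw [← hAB n]; exact le_add_of_nonneg_right (Complex.normSq_nonneg _))
  have hsB : Summable B := hsum.of_nonneg_of_le (fun n => Complex.normSq_nonneg _)
      (fun n => by rw [← hAB n]; exact le_add_of_nonneg_left (Complex.normSq_nonneg _))
  have h1 : ∀ n : ℤ, Complex.normSq (QWop U ψ n 0) + Complex.normSq (QWop U ψ n 1)
      = A (n + 1) + B (n - 1) := by
    intro n; rw [qwop_apply0, qwop_apply1]
  have hsA' : Summable fun n : ℤ => A (n + 1) := by
    have := (Equiv.addRight (1:ℤ)).summable_iff.mpr hsA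
    exact this
  have hsB' : Summable fun n : ℤ => B (n - 1) := by
    have := (Equiv.subRight (1:ℤ)).summable_iff.mpr hsB
    exact this
  calc ∑' n : ℤ, (Complex.normSq (QWop U ψ n 0) + Complex.normSq (QWop U ψ n 1))
      = ∑' n : ℤ, (A (n + 1) + B (n - 1)) := tsum_congr h1
    _ = (∑' n : ℤ, A (n + 1)) + ∑' n : ℤ, B (n - 1) := Summable.tsum_add hsA' hsB'
    _ = (∑' n, A n) + (∑' n, B n) := by
        have t1 := (Equiv.addRight (1:ℤ)).tsum_eq A
        have t2 := (Equiv.subRight (1:ℤ)).tsum_eq B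
        simp only [Equiv.coe_addRight, Equiv.subRight_apply] at t1 t2
        rw [t1, t2]
    _ = ∑' n, (A n + B n) := (Summable.tsum_add hsA hsB).symm
    _ = _ := tsum_congr hAB

lemma exists_ne_c2 {ψ : ℤ → C2} (h : ψ ≠ 0) : ∃ n i, ψ n i ≠ 0 := by
  by_contra h'
  push_neg at h'
  exact h (funext fun n => funext fun i => h' n i)

lemma mod_one {U : ℤ → Matrix (Fin 2) (Fin 2) ℂ} {μ : ℂ} {ψ : ℤ → C2}
    (hU : CoinsUnitary U) (hψ : ψ ≠ 0)
    (hsum : Summable fun n => Complex.normSq (ψ n 0) + Complex.normSq (ψ n 1))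
    (hsol : IsSol U μ ψ) : Complex.normSq μ = 1 := by
  have hL : ∑' n : ℤ, (Complex.normSq (QWop U ψ n 0) + Complex.normSq (QWop U ψ n 1))
      = Complex.normSq μ * ∑' n : ℤ, (Complex.normSq (ψ n 0) + Complex.normSq (ψ n 1)) := by
    rw [← tsum_mul_left]
    refine tsum_congr fun n => ?_
    rw [hsol n]
    simp only [Pi.smul_apply, smul_eq_mul, Complex.normSq_mul]
    ring
  have h2 := qwop_norm hU ψ hsum
  obtain ⟨n, i, hni⟩ := exists_ne_c2 hψ
  have hpos : 0 < ∑' n : ℤ, (Complex.normSq (ψ n 0) + Complex.normSq (ψ n 1)) := by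
    refine Summable.tsum_pos hsum (fun k => add_nonneg (Complex.normSq_nonneg _) (Complex.normSq_nonneg _))
      n ?_
    fin_cases i
    · exact add_pos_of_pos_of_nonneg (Complex.normSq_pos.mpr hni) (Complex.normSq_nonneg _)
    · exact add_pos_of_nonneg_of_pos (Complex.normSq_nonneg _) (Complex.normSq_pos.mpr hni)
  have h3 : Complex.normSq μ * (∑' n : ℤ, (Complex.normSq (ψ n 0) + Complex.normSq (ψ n 1)))
      = 1 * (∑' n : ℤ, (Complex.normSq (ψ n 0) + Complex.normSq (ψ n 1))) := by
    rw [one_mul]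
    exact hL.symm.trans h2
  exact mul_right_cancel₀ (ne_of_gt hpos) h3

lemma sol_free_L {U : ℤ → Matrix (Fin 2) (Fin 2) ℂ} {μ : ℂ} {ψ : ℤ → C2} {n0 : ℕ}
    (hsol : IsSol U μ ψ) (hA1 : A1 n0 U) {k : ℤ} (hk : k < 0 ∨ (n0 : ℤ) < k) :
    ψ k 0 = μ * ψ (k - 1) 0 := by
  have := sol_compL hsol k
  rwa [hA1 k hk, Matrix.one_mulVec] at this

lemma sol_free_R {U : ℤ → Matrix (Fin 2) (Fin 2) ℂ} {μ : ℂ} {ψ : ℤ → C2} {n0 : ℕ}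
    (hsol : IsSol U μ ψ) (hA1 : A1 n0 U) {k : ℤ} (hk : k < 0 ∨ (n0 : ℤ) < k) :
    ψ k 1 = μ * ψ (k + 1) 1 := by
  have := sol_compR hsol k
  rwa [hA1 k hk, Matrix.one_mulVec] at this

lemma tails {n0 : ℕ} {U : ℤ → Matrix (Fin 2) (Fin 2) ℂ} {μ : ℂ} {ψ : ℤ → C2}
    (hU : CoinsUnitary U) (hA1 : A1 n0 U) (hψ : ψ ≠ 0)
    (hsum : Summable fun n => Complex.normSq (ψ n 0) + Complex.normSq (ψ n 1))
    (hsol : IsSol U μ ψ) :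
    (∀ n : ℤ, n ≤ -1 → ψ n 0 = 0) ∧ (∀ n : ℤ, n ≤ 0 → ψ n 1 = 0) ∧
    (∀ n : ℤ, (n0 : ℤ) ≤ n → ψ n 0 = 0) ∧ (∀ n : ℤ, (n0 : ℤ) + 1 ≤ n → ψ n 1 = 0) := by
  have hμ : Complex.normSq μ = 1 := mod_one hU hψ hsum hsol
  set f : ℤ → ℝ := fun k => Complex.normSq (ψ k 0) with hf
  set g : ℤ → ℝ := fun k => Complex.normSq (ψ k 1) with hg
  have hsf : Summable f := hsum.of_nonneg_of_le (fun n => Complex.normSq_nonneg _)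
      (fun n => le_add_of_nonneg_right (Complex.normSq_nonneg _))
  have hsg : Summable g := hsum.of_nonneg_of_le (fun n => Complex.normSq_nonneg _)
      (fun n => le_add_of_nonneg_left (Complex.normSq_nonneg _))
  have h0f : ∀ n, 0 ≤ f n := fun n => Complex.normSq_nonneg _
  have h0g : ∀ n, 0 ≤ g n := fun n => Complex.normSq_nonneg _
  have hstepL : ∀ k : ℤ, (k < 0 ∨ (n0 : ℤ) < k) → f k = f (k - 1) := by
    intro k hk
    have := sol_free_L hsol hA1 hk
    simp only [hf]
    rw [this, Complex.normSq_mul, hμ, one_mul]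
  have hstepR : ∀ k : ℤ, (k < 0 ∨ (n0 : ℤ) < k) → g k = g (k + 1) := by
    intro k hk
    have := sol_free_R hsol hA1 hk
    simp only [hg]
    rw [this, Complex.normSq_mul, hμ, one_mul]
  refine ⟨?_, ?_, ?_, ?_⟩
  · intro n hn
    have h0 : f n = 0 := by
      apply tail_zero hsf h0f n (-1) (by norm_num)
      intro j
      induction j with
      | zero => norm_num
      | succ j ih =>
        have heq : n + (-1) * ((j : ℤ) + 1) = (n + (-1) * (j : ℤ)) - 1 := by ring
        push_cast
        rw [heq, ← hstepL (n + (-1) * (j : ℤ)) (Or.inl (by omega))]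
        push_cast at ih
        exact ih
    exact Complex.normSq_eq_zero.mp h0
  · intro n hn
    have h0 : g n = 0 := by
      apply tail_zero hsg h0g n (-1) (by norm_num)
      intro j
      induction j with
      | zero => norm_num
      | succ j ih =>
        have heq : n + (-1) * ((j : ℤ) + 1) = (n + (-1) * (j : ℤ)) - 1 := by ring
        push_cast
        rw [heq]
        have := hstepR (n + (-1) * (j : ℤ) - 1) (Or.inl (by omega))
        rw [sub_add_cancel] at this
        rw [this]
        push_cast at ih
        exact ih
    exact Complex.normSq_eq_zero.mp h0
  · intro n hn
    have h0 : f n = 0 := by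
      apply tail_zero hsf h0f n 1 (by norm_num)
      intro j
      induction j with
      | zero => norm_num
      | succ j ih =>
        have heq : n + 1 * ((j : ℤ) + 1) = (n + 1 * (j : ℤ)) + 1 := by ring
        push_cast
        rw [heq]
        have := hstepL (n + 1 * (j : ℤ) + 1) (Or.inr (by omega))
        rw [add_sub_cancel_right] at this
        rw [this]
        push_cast at ih
        exact ih
    exact Complex.normSq_eq_zero.mp h0
  · intro n hn
    have h0 : g n = 0 := by
      apply tail_zero hsg h0g n 1 (by norm_num)
      intro j
      induction j with
      | zero => norm_num
      | succ j ih =>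
        have heq : n + 1 * ((j : ℤ) + 1) = (n + 1 * (j : ℤ)) + 1 := by ring
        push_cast
        rw [heq, ← hstepR (n + 1 * (j : ℤ)) (Or.inr (by omega))]
        push_cast at ih
        exact ih
    exact Complex.normSq_eq_zero.mp h0

end Aux

lemma Kmat_mulVec0 (n0 : ℕ) (U : ℤ → Matrix (Fin 2) (Fin 2) ℂ) (v : Fin (n0 + 1) × Fin 2 → ℂ)
    (j : Fin (n0 + 1)) :
    (Kmat n0 U).mulVec v (j, 0)
      = if h : (j : ℕ) < n0 then
          (U (((j : ℕ) : ℤ) + 1)).mulVec (fun l => v (⟨(j : ℕ) + 1, by omega⟩, l)) 0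
        else 0 := by
  have hexp : (Kmat n0 U).mulVec v (j, 0)
      = ∑ k : Fin (n0 + 1), ∑ l : Fin 2, Kmat n0 U (j, 0) (k, l) * v (k, l) := by
    rw [Matrix.mulVec, dotProduct, Fintype.sum_prod_type]
  have hK : ∀ (k : Fin (n0 + 1)) (l : Fin 2), Kmat n0 U (j, 0) (k, l)
      = if (k : ℕ) = (j : ℕ) + 1 then U (((j : ℕ) : ℤ) + 1) 0 l else 0 := by
    intro k l
    simp [Kmat, (by decide : (0 : Fin 2) ≠ 1)]
  rw [hexp]
  by_cases h : (j : ℕ) < n0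
  · rw [dif_pos h]
    set k0 : Fin (n0 + 1) := ⟨(j : ℕ) + 1, by omega⟩ with hk0
    have hcond : ∀ k : Fin (n0 + 1), ((k : ℕ) = (j : ℕ) + 1) = (k = k0) := by
      intro k
      apply propext
      constructor
      · intro hh; exact Fin.ext hh
      · intro hh; rw [hh]
    have hsum : ∀ k : Fin (n0 + 1), (∑ l : Fin 2, Kmat n0 U (j, 0) (k, l) * v (k, l))
        = if k = k0 then (U (((j : ℕ) : ℤ) + 1)).mulVec (fun l => v (k0, l)) 0 else 0 := by
      intro k
      by_cases hk : k = k0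
      · rw [if_pos hk, hk, mulVec_comp0, Fin.sum_univ_two, hK, hK,
          if_pos (by rw [hk0]), if_pos (by rw [hk0])]
      · rw [if_neg hk]
        apply Finset.sum_eq_zero
        intro l _
        rw [hK, if_neg (by rw [hcond k]; exact hk), zero_mul]
    rw [Finset.sum_congr rfl (fun k _ => hsum k)]
    simp only [Finset.sum_ite_eq', Finset.mem_univ, if_true]
  · rw [dif_neg h]
    apply Finset.sum_eq_zero
    intro k _
    apply Finset.sum_eq_zero
    intro l _
    rw [hK]
    rw [if_neg (by omega), zero_mul]

lemma Kmat_mulVec1 (n0 : ℕ) (U : ℤ → Matrix (Fin 2) (Fin 2) ℂ) (v : Fin (n0 + 1) × Fin 2 → ℂ)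
    (j : Fin (n0 + 1)) :
    (Kmat n0 U).mulVec v (j, 1)
      = if h : 0 < (j : ℕ) then
          (U ((((j : ℕ) - 1 : ℕ) : ℤ))).mulVec (fun l => v (⟨(j : ℕ) - 1, by omega⟩, l)) 1
        else 0 := by
  have hexp : (Kmat n0 U).mulVec v (j, 1)
      = ∑ k : Fin (n0 + 1), ∑ l : Fin 2, Kmat n0 U (j, 1) (k, l) * v (k, l) := by
    rw [Matrix.mulVec, dotProduct, Fintype.sum_prod_type]
  have hK : ∀ (k : Fin (n0 + 1)) (l : Fin 2), Kmat n0 U (j, 1) (k, l)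
      = if (k : ℕ) + 1 = (j : ℕ) then U (((k : ℕ) : ℤ)) 1 l else 0 := by
    intro k l
    simp [Kmat, (by decide : (1 : Fin 2) ≠ 0)]
  rw [hexp]
  by_cases h : 0 < (j : ℕ)
  · rw [dif_pos h]
    set k0 : Fin (n0 + 1) := ⟨(j : ℕ) - 1, by omega⟩ with hk0
    have hcond : ∀ k : Fin (n0 + 1), ((k : ℕ) + 1 = (j : ℕ)) ↔ (k = k0) := by
      intro k
      constructor
      · intro hh; apply Fin.ext; exact (by omega : (k : ℕ) = (j : ℕ) - 1)
      · intro hh; rw [hh]; exact (by omega : (j : ℕ) - 1 + 1 = (j : ℕ))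
    have hsum : ∀ k : Fin (n0 + 1), (∑ l : Fin 2, Kmat n0 U (j, 1) (k, l) * v (k, l))
        = if k = k0 then (U ((((j : ℕ) - 1 : ℕ) : ℤ))).mulVec (fun l => v (k0, l)) 1 else 0 := by
      intro k
      by_cases hk : k = k0
      · rw [if_pos hk, hk, mulVec_comp1, Fin.sum_univ_two, hK, hK,
          if_pos ((by omega : (j : ℕ) - 1 + 1 = (j : ℕ)) : (k0 : ℕ) + 1 = (j : ℕ)),
          if_pos ((by omega : (j : ℕ) - 1 + 1 = (j : ℕ)) : (k0 : ℕ) + 1 = (j : ℕ))]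
      · rw [if_neg hk]
        apply Finset.sum_eq_zero
        intro l _
        rw [hK, if_neg (fun hh => hk ((hcond k).mp hh)), zero_mul]
    rw [Finset.sum_congr rfl (fun k _ => hsum k)]
    simp only [Finset.sum_ite_eq', Finset.mem_univ, if_true]
  · rw [dif_neg h]
    apply Finset.sum_eq_zero
    intro k _
    apply Finset.sum_eq_zero
    intro l _
    rw [hK]
    rw [if_neg (by omega), zero_mul]

lemma support_in {n0 : ℕ} {U : ℤ → Matrix (Fin 2) (Fin 2) ℂ} {μ : ℂ} {ψ : ℤ → C2}
    (hU : CoinsUnitary U) (hA1 : A1 n0 U) (hψ : ψ ≠ 0)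
    (hsum : Summable fun n => Complex.normSq (ψ n 0) + Complex.normSq (ψ n 1))
    (hsol : IsSol U μ ψ) :
    ∀ k : ℤ, (k < 0 ∨ (n0 : ℤ) < k) → ψ k = 0 := by
  obtain ⟨tl0, tl1, tr0, tr1⟩ := tails hU hA1 hψ hsum hsol
  intro k hk
  rcases hk with hk | hk
  · exact C2_ext (tl0 k (by omega)) (tl1 k (by omega))
  · exact C2_ext (tr0 k (by omega)) (tr1 k (by omega))

lemma abs_one_of {μ : ℂ} (h : Complex.normSq μ = 1) : ‖μ‖ = 1 := by
  have h2 : ‖μ‖ ^ 2 = 1 := by rw [Complex.sq_norm, h]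
  have h3 : (‖μ‖ - 1) * (‖μ‖ + 1) = 0 := by linear_combination h2
  rcases mul_eq_zero.mp h3 with h4 | h4
  · linarith
  · have := norm_nonneg μ
    linarith

lemma mu_ne_zero {μ : ℂ} (h : Complex.normSq μ = 1) : μ ≠ 0 := by
  intro h0
  rw [h0] at h
  simp at h

/-! ### Part (2) → (1) -/

lemma two_zeros {n0 : ℕ} {U : ℤ → Matrix (Fin 2) (Fin 2) ℂ} {μ : ℂ} {ψ : ℤ → C2}
    (hU : CoinsUnitary U) (hA1 : A1 n0 U) (hψ : ψ ≠ 0)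
    (hsum : Summable fun n => Complex.normSq (ψ n 0) + Complex.normSq (ψ n 1))
    (hsol : IsSol U μ ψ) :
    ∃ n m : ℤ, n ≠ m ∧ U n 0 0 = 0 ∧ U m 0 0 = 0 := by
  classical
  have hμ1 : Complex.normSq μ = 1 := mod_one hU hψ hsum hsol
  have hμ0 : μ ≠ 0 := mu_ne_zero hμ1
  have hout := support_in hU hA1 hψ hsum hsol
  set S : Finset ℤ := (Finset.Icc (0:ℤ) (n0:ℤ)).filter (fun k => ψ k ≠ 0) with hS
  have hzero : ∀ k, k ∉ S → ψ k = 0 := by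
    intro k hk
    by_contra hne
    apply hk
    rw [hS, Finset.mem_filter, Finset.mem_Icc]
    refine ⟨?_, hne⟩
    by_contra hicc
    exact hne (hout k (by omega))
  have hSne : S.Nonempty := by
    obtain ⟨k, i, hki⟩ := exists_ne_c2 hψ
    refine ⟨k, ?_⟩
    by_contra hk
    rw [hzero k hk] at hki
    exact hki rfl
  set s := S.min' hSne with hs
  set t := S.max' hSne with ht
  have hψs : ψ s ≠ 0 := (Finset.mem_filter.mp (S.min'_mem hSne)).2
  have hψt : ψ t ≠ 0 := (Finset.mem_filter.mp (S.max'_mem hSne)).2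
  have hlt : ∀ k, k < s → ψ k = 0 := fun k hk =>
    hzero k (fun hmem => absurd (S.min'_le k hmem) (not_le.mpr hk))
  have hgt : ∀ k, t < k → ψ k = 0 := fun k hk =>
    hzero k (fun hmem => absurd (S.le_max' k hmem) (not_le.mpr hk))
  have hs1 : ψ s 1 = 0 := by
    have h := sol_compR hsol (s - 1)
    rw [hlt (s - 1) (by omega), Matrix.mulVec_zero, sub_add_cancel] at h
    rcases mul_eq_zero.mp h.symm with h | h
    · exact absurd h hμ0
    · exact h
  have hs0 : ψ s 0 ≠ 0 := fun h => hψs (C2_ext h hs1)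
  have has : U s 0 0 = 0 := by
    have h := sol_compL hsol s
    rw [hlt (s - 1) (by omega), mulVec_comp0, hs1, mul_zero, add_zero] at h
    simp only [Pi.zero_apply, mul_zero] at h
    exact (mul_eq_zero.mp h).resolve_right hs0
  have ht0 : ψ t 0 = 0 := by
    have h := sol_compL hsol (t + 1)
    rw [hgt (t + 1) (by omega), Matrix.mulVec_zero, add_sub_cancel_right] at h
    rcases mul_eq_zero.mp h.symm with h | h
    · exact absurd h hμ0
    · exact h
  have ht1 : ψ t 1 ≠ 0 := fun h => hψt (C2_ext ht0 h)
  have hdt : U t 1 1 = 0 := by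
    have h := sol_compR hsol t
    rw [hgt (t + 1) (by omega), mulVec_comp1, ht0, mul_zero, zero_add] at h
    simp only [Pi.zero_apply, mul_zero] at h
    exact (mul_eq_zero.mp h).resolve_right ht1
  have hat : U t 0 0 = 0 := by
    have h := normSq_a_eq_d (U t) (hU t)
    rw [hdt] at h
    simp only [map_zero] at h
    exact Complex.normSq_eq_zero.mp h
  refine ⟨s, t, ?_, has, hat⟩
  intro h
  rw [h] at hs0
  exact hs0 ht0

/-! ### Part (2) → (3) -/

lemma to_K {n0 : ℕ} {U : ℤ → Matrix (Fin 2) (Fin 2) ℂ} {μ : ℂ} {ψ : ℤ → C2}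
    (hU : CoinsUnitary U) (hA1 : A1 n0 U) (hψ : ψ ≠ 0)
    (hsum : Summable fun n => Complex.normSq (ψ n 0) + Complex.normSq (ψ n 1))
    (hsol : IsSol U μ ψ) :
    ‖μ‖ = 1 ∧ HasEig n0 U μ := by
  obtain ⟨tl0, tl1, tr0, tr1⟩ := tails hU hA1 hψ hsum hsol
  have hμ1 : Complex.normSq μ = 1 := mod_one hU hψ hsum hsol
  have hout := support_in hU hA1 hψ hsum hsol
  refine ⟨abs_one_of hμ1, resK n0 ψ, ?_, ?_⟩
  · obtain ⟨k, i, hki⟩ := exists_ne_c2 hψ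
    have hk0 : 0 ≤ k := by
      by_contra h
      rw [hout k (Or.inl (by omega))] at hki
      exact hki rfl
    have hkn : k ≤ (n0 : ℤ) := by
      by_contra h
      rw [hout k (Or.inr (by omega))] at hki
      exact hki rfl
    intro hv
    have h := congrFun hv (⟨k.toNat, by omega⟩, i)
    simp only [resK, Pi.zero_apply] at h
    rw [show (((⟨k.toNat, by omega⟩ : Fin (n0 + 1)) : ℕ) : ℤ) = k by
      simp [Int.toNat_of_nonneg hk0]] at h
    exact hki h
  · funext p
    obtain ⟨j, i⟩ := p
    have hval : ∀ l : Fin 2, (μ • resK n0 ψ) (j, l) = μ * ψ ((j : ℕ) : ℤ) l := by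
      intro l; simp [resK]
    fin_cases i
    · show (Kmat n0 U).mulVec (resK n0 ψ) (j, 0) = (μ • resK n0 ψ) (j, 0)
      rw [Kmat_mulVec0, hval 0]
      by_cases h : (j : ℕ) < n0
      · rw [dif_pos h]
        have hre : (fun l => resK n0 ψ (⟨(j : ℕ) + 1, by omega⟩, l))
            = ψ (((j : ℕ) : ℤ) + 1) := by
          funext l
          simp only [resK]
          congr 1
        rw [hre]
        have h2 := sol_compL hsol (((j : ℕ) : ℤ) + 1)
        rw [add_sub_cancel_right] at h2
        exact h2
      · rw [dif_neg h]
        have hj : (j : ℕ) = n0 := by omega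
        rw [tr0 ((j : ℕ) : ℤ) (by omega), mul_zero]
    · show (Kmat n0 U).mulVec (resK n0 ψ) (j, 1) = (μ • resK n0 ψ) (j, 1)
      rw [Kmat_mulVec1, hval 1]
      by_cases h : 0 < (j : ℕ)
      · rw [dif_pos h]
        have hre : (fun l => resK n0 ψ (⟨(j : ℕ) - 1, by omega⟩, l))
            = ψ ((((j : ℕ) - 1 : ℕ)) : ℤ) := by
          funext l
          simp only [resK]
        rw [hre]
        have h2 := sol_compR hsol ((((j : ℕ) - 1 : ℕ)) : ℤ)
        rw [show ((((j : ℕ) - 1 : ℕ)) : ℤ) + 1 = ((j : ℕ) : ℤ) by push_cast; omega] at h2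
        exact h2
      · rw [dif_neg h]
        have hj : (j : ℕ) = 0 := by omega
        rw [tl1 ((j : ℕ) : ℤ) (by omega), mul_zero]


lemma C2_ext2 {x y : C2} (h0 : x 0 = y 0) (h1 : x 1 = y 1) : x = y := by
  funext i
  fin_cases i <;> assumption

/-! ### Part (3) → (2) -/

lemma from_K {n0 : ℕ} {U : ℤ → Matrix (Fin 2) (Fin 2) ℂ} {μ : ℂ}
    (hU : CoinsUnitary U) (hA1 : A1 n0 U) (habs : ‖μ‖ = 1) (h : HasEig n0 U μ) :
    ∃ ψ : ℤ → C2, ψ ≠ 0 ∧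
      (Summable fun n : ℤ => Complex.normSq (ψ n 0) + Complex.normSq (ψ n 1)) ∧
      IsSol U μ ψ := by
  classical
  obtain ⟨v, hv0, hKv⟩ := h
  have hμ1 : Complex.normSq μ = 1 := by
    rw [← Complex.sq_norm, habs]; norm_num
  set v' : ℕ → Fin 2 → ℂ := fun a i => if ha : a < n0 + 1 then v (⟨a, ha⟩, i) else 0 with hv'
  set ψ : ℤ → C2 := fun k => if 0 ≤ k ∧ k ≤ (n0 : ℤ) then (fun i => v' k.toNat i) else 0 with hψd
  have hin : ∀ (j : Fin (n0 + 1)) (i : Fin 2), ψ ((j : ℕ) : ℤ) i = v (j, i) := by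
    intro j i
    have hj1 : (0 : ℤ) ≤ ((j : ℕ) : ℤ) ∧ ((j : ℕ) : ℤ) ≤ (n0 : ℤ) := by
      have := j.isLt; omega
    simp only [hψd, if_pos hj1, hv', Int.toNat_natCast, dif_pos j.isLt]
  have hout : ∀ k : ℤ, (k < 0 ∨ (n0 : ℤ) < k) → ψ k = 0 := by
    intro k hk
    simp only [hψd]
    rw [if_neg (by omega)]
  have hψne : ψ ≠ 0 := by
    obtain ⟨p, hp⟩ := Function.ne_iff.mp hv0
    intro h0
    apply hp
    have h2 : ψ (((p.1 : ℕ)) : ℤ) p.2 = 0 := by rw [h0]; rfl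
    have h3 : v (p.1, p.2) = 0 := (hin p.1 p.2).symm.trans h2
    simpa using h3
  have hsum : Summable fun n : ℤ => Complex.normSq (ψ n 0) + Complex.normSq (ψ n 1) := by
    apply summable_of_ne_finset_zero (s := Finset.Icc (0 : ℤ) (n0 : ℤ))
    intro k hk
    rw [Finset.mem_Icc] at hk
    rw [hout k (by omega)]
    simp
  -- the eigen-equation on the middle block
  have heqmid : ∀ k : ℤ, 0 ≤ k → k ≤ (n0 : ℤ) → QWop U ψ k = μ • ψ k := by
    intro k hk0 hkn
    have hjlt : k.toNat < n0 + 1 := by omega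
    set j : Fin (n0 + 1) := ⟨k.toNat, hjlt⟩ with hj
    have hjk : ((j : ℕ) : ℤ) = k := by
      simp only [hj]
      exact Int.toNat_of_nonneg hk0
    have hK0 := congrFun hKv (j, 0)
    have hK1 := congrFun hKv (j, 1)
    rw [Kmat_mulVec0] at hK0
    rw [Kmat_mulVec1] at hK1
    apply C2_ext2
    · -- component 0
      rw [qwop_apply0]
      have hsm : (μ • ψ k) 0 = μ * v (j, 0) := by
        rw [← hin j 0, hjk]
        simp only [Pi.smul_apply, smul_eq_mul]
      rw [hsm]
      by_cases hcase : (j : ℕ) < n0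
      · rw [dif_pos hcase] at hK0
        have hfun : (fun l => v (⟨(j : ℕ) + 1, by omega⟩, l)) = ψ (k + 1) := by
          funext l
          have hc : ((((j : ℕ) + 1 : ℕ)) : ℤ) = k + 1 := by
            have := hjk; push_cast; omega
          rw [← hc]
          exact (hin ⟨(j : ℕ) + 1, by omega⟩ l).symm
        rw [hfun] at hK0
        rw [show ((j : ℕ) : ℤ) + 1 = k + 1 by rw [hjk]] at hK0
        rw [hK0]
        simp only [Pi.smul_apply, smul_eq_mul]
      · rw [dif_neg hcase] at hK0
        have hψk1 : ψ (k + 1) = 0 := hout (k + 1) (by omega)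
        rw [hψk1, Matrix.mulVec_zero]
        have hz : μ * v (j, 0) = 0 := by
          have h9 := hK0.symm
          simpa only [Pi.smul_apply, smul_eq_mul] using h9
        rw [hz]
        rfl
    · -- component 1
      rw [qwop_apply1]
      have hsm : (μ • ψ k) 1 = μ * v (j, 1) := by
        rw [← hin j 1, hjk]
        simp only [Pi.smul_apply, smul_eq_mul]
      rw [hsm]
      by_cases hcase : 0 < (j : ℕ)
      · rw [dif_pos hcase] at hK1
        have hfun : (fun l => v (⟨(j : ℕ) - 1, by omega⟩, l)) = ψ (k - 1) := by
          funext l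
          have hc : ((((j : ℕ) - 1 : ℕ)) : ℤ) = k - 1 := by
            have := hjk; omega
          rw [← hc]
          exact (hin ⟨(j : ℕ) - 1, by omega⟩ l).symm
        rw [hfun] at hK1
        rw [show ((((j : ℕ) - 1 : ℕ)) : ℤ) = k - 1 by have := hjk; omega] at hK1
        rw [hK1]
        simp only [Pi.smul_apply, smul_eq_mul]
      · rw [dif_neg hcase] at hK1
        have hψk1 : ψ (k - 1) = 0 := hout (k - 1) (by omega)
        rw [hψk1, Matrix.mulVec_zero]
        have hz : μ * v (j, 1) = 0 := by
          have h9 := hK1.symm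
          simpa only [Pi.smul_apply, smul_eq_mul] using h9
        rw [hz]
        rfl
  -- vanishing far away
  have hqout : ∀ k : ℤ, (k ≤ -2 ∨ (n0 : ℤ) + 2 ≤ k) → QWop U ψ k = 0 := by
    intro k hk
    apply C2_ext
    · rw [qwop_apply0, hout (k + 1) (by omega), Matrix.mulVec_zero]
      rfl
    · rw [qwop_apply1, hout (k - 1) (by omega), Matrix.mulVec_zero]
      rfl
  -- norm argument for the two boundary sites
  set G : ℤ → ℝ := fun n => Complex.normSq (QWop U ψ n 0) + Complex.normSq (QWop U ψ n 1)
    with hG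
  set H : ℤ → ℝ := fun n => Complex.normSq (ψ n 0) + Complex.normSq (ψ n 1) with hH
  have hGH : ∀ n : ℤ, 0 ≤ n → n ≤ (n0 : ℤ) → G n = H n := by
    intro n h1 h2
    simp only [hG, hH]
    rw [heqmid n h1 h2]
    simp only [Pi.smul_apply, smul_eq_mul, Complex.normSq_mul, hμ1, one_mul]
  have hHout : ∀ n : ℤ, (n < 0 ∨ (n0 : ℤ) < n) → H n = 0 := by
    intro n hn
    simp only [hH]
    rw [hout n hn]
    simp
  have hGout : ∀ n : ℤ, (n ≤ -2 ∨ (n0 : ℤ) + 2 ≤ n) → G n = 0 := by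
    intro n hn
    simp only [hG]
    rw [hqout n hn]
    simp
  have hGnn : ∀ n, 0 ≤ G n := fun n => add_nonneg (Complex.normSq_nonneg _) (Complex.normSq_nonneg _)
  have hHnn : ∀ n, 0 ≤ H n := fun n => add_nonneg (Complex.normSq_nonneg _) (Complex.normSq_nonneg _)
  have hle : ∀ n, H n ≤ G n := by
    intro n
    by_cases h1 : 0 ≤ n ∧ n ≤ (n0 : ℤ)
    · rw [hGH n h1.1 h1.2]
    · rw [hHout n (by omega)]
      exact hGnn n
  have hsumG : Summable G := by
    apply summable_of_ne_finset_zero (s := Finset.Icc (-1 : ℤ) ((n0 : ℤ) + 1))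
    intro k hk
    rw [Finset.mem_Icc] at hk
    exact hGout k (by omega)
  have htsum : ∑' n, G n = ∑' n, H n := qwop_norm hU ψ hsum
  have hall : ∀ n, G n = H n := by
    by_contra hcon
    push_neg at hcon
    obtain ⟨n, hn⟩ := hcon
    have hD : Summable (fun n => G n - H n) := hsumG.sub hsum
    have hDz : ∑' n, (G n - H n) = 0 := by
      rw [Summable.tsum_sub hsumG hsum, htsum, sub_self]
    have hpos : 0 < ∑' n, (G n - H n) :=
      Summable.tsum_pos hD (fun k => sub_nonneg.mpr (hle k)) n
        (sub_pos.mpr (lt_of_le_of_ne (hle n) (Ne.symm hn)))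
    rw [hDz] at hpos
    exact lt_irrefl 0 hpos
  have hbdry : ∀ k : ℤ, (k = -1 ∨ k = (n0 : ℤ) + 1) → QWop U ψ k = 0 := by
    intro k hk
    have hHk : H k = 0 := hHout k (by omega)
    have hGk : G k = 0 := by rw [hall k, hHk]
    simp only [hG] at hGk
    have h1 : Complex.normSq (QWop U ψ k 0) = 0 := by
      have := Complex.normSq_nonneg (QWop U ψ k 0)
      have := Complex.normSq_nonneg (QWop U ψ k 1)
      linarith
    have h2 : Complex.normSq (QWop U ψ k 1) = 0 := by
      have := Complex.normSq_nonneg (QWop U ψ k 0)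
      have := Complex.normSq_nonneg (QWop U ψ k 1)
      linarith
    exact C2_ext (Complex.normSq_eq_zero.mp h1) (Complex.normSq_eq_zero.mp h2)
  refine ⟨ψ, hψne, hsum, ?_⟩
  intro k
  by_cases h1 : 0 ≤ k ∧ k ≤ (n0 : ℤ)
  · exact heqmid k h1.1 h1.2
  · by_cases h2 : k = -1 ∨ k = (n0 : ℤ) + 1
    · rw [hbdry k h2, hout k (by omega), smul_zero]
    · rw [hqout k (by omega), hout k (by omega), smul_zero]

/-- equivalence of (1) at least two vanishing `aₙ`,
(2) `𝒰` has an `ℓ²`-eigenvalue, (3) `𝒦` has an eigenvalue of modulus one. -/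
theorem stmt_1 (n0 : ℕ) (U : ℤ → Matrix (Fin 2) (Fin 2) ℂ)
    (hU : CoinsUnitary U) (hA1 : A1 n0 U) :
    ((∃ n m : ℤ, n ≠ m ∧ U n 0 0 = 0 ∧ U m 0 0 = 0) ↔
      (∃ (μ : ℂ) (ψ : ℤ → C2), ψ ≠ 0 ∧
        Summable (fun n : ℤ => ∑ i : Fin 2, ‖ψ n i‖ ^ 2) ∧ IsSol U μ ψ)) ∧
    ((∃ (μ : ℂ) (ψ : ℤ → C2), ψ ≠ 0 ∧
        Summable (fun n : ℤ => ∑ i : Fin 2, ‖ψ n i‖ ^ 2) ∧ IsSol U μ ψ) ↔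
      ∃ μ : ℂ, ‖μ‖ = 1 ∧ HasEig n0 U μ) := by
  have hconv : ∀ ψ : ℤ → C2,
      (Summable (fun n : ℤ => ∑ i : Fin 2, ‖ψ n i‖ ^ 2) ↔
        Summable (fun n : ℤ => Complex.normSq (ψ n 0) + Complex.normSq (ψ n 1))) := by
    intro ψ
    apply summable_congr
    intro n
    rw [Fin.sum_univ_two, Complex.sq_norm, Complex.sq_norm]
  constructor
  · constructor
    · rintro ⟨n, m, hne, han, ham⟩
      rcases hne.lt_or_gt with hlt | hlt
      · obtain ⟨μ, ψ, hψ0, hsupp, hsol⟩ := trap_eig hU hlt han ham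
        refine ⟨μ, ψ, hψ0, ?_, hsol⟩
        rw [hconv ψ]
        apply summable_of_ne_finset_zero (s := Finset.Icc n m)
        intro k hk
        rw [Finset.mem_Icc] at hk
        rw [hsupp k (by omega)]
        simp
      · obtain ⟨μ, ψ, hψ0, hsupp, hsol⟩ := trap_eig hU hlt ham han
        refine ⟨μ, ψ, hψ0, ?_, hsol⟩
        rw [hconv ψ]
        apply summable_of_ne_finset_zero (s := Finset.Icc m n)
        intro k hk
        rw [Finset.mem_Icc] at hk
        rw [hsupp k (by omega)]
        simp
    · rintro ⟨μ, ψ, hψ0, hsum, hsol⟩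
      exact two_zeros hU hA1 hψ0 ((hconv ψ).mp hsum) hsol
  · constructor
    · rintro ⟨μ, ψ, hψ0, hsum, hsol⟩
      obtain ⟨h1, h2⟩ := to_K hU hA1 hψ0 ((hconv ψ).mp hsum) hsol
      exact ⟨μ, h1, h2⟩
    · rintro ⟨μ, habs, heig⟩
      obtain ⟨ψ, hψ0, hsum, hsol⟩ := from_K hU hA1 habs heig
      exact ⟨μ, ψ, hψ0, (hconv ψ).mpr hsum, hsol⟩
end
end

section
/- Assume (A1) and (A2). For every ξ ∈ ℂ, the Wronskian of the two outgoing Jost solutions at n = −1 satisfies 𝒲_{−1}(ψ_out^−, ψ_out^+) := det(Π_{−1}ψ_out^−(·;ξ), Π_{−1}ψ_out^+(·;ξ)) = e^{i(n₀+2)ξ} 𝕋₂₂(ξ). -/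
open Complex Matrix

noncomputable section

lemma comp0 (U : ℤ → Matrix (Fin 2) (Fin 2) ℂ) (μ : ℂ) (ψ : ℤ → C2)
    (h : IsSol U μ ψ) (n : ℤ) :
    U (n+1) 0 0 * ψ (n+1) 0 + U (n+1) 0 1 * ψ (n+1) 1 = μ * ψ n 0 := by
  have := congrFun (h n) 0
  simpa [QWop, Pmat, Qmat, Matrix.mulVec, dotProduct, Fin.sum_univ_two] using this

lemma comp1 (U : ℤ → Matrix (Fin 2) (Fin 2) ℂ) (μ : ℂ) (ψ : ℤ → C2)
    (h : IsSol U μ ψ) (n : ℤ) :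
    U (n-1) 1 0 * ψ (n-1) 0 + U (n-1) 1 1 * ψ (n-1) 1 = μ * ψ n 1 := by
  have := congrFun (h n) 1
  simpa [QWop, Pmat, Qmat, Matrix.mulVec, dotProduct, Fin.sum_univ_two] using this

-- unitarity relations
lemma urel (U : Matrix (Fin 2) (Fin 2) ℂ) (hU : U ∈ Matrix.unitaryGroup (Fin 2) ℂ) :
    (starRingEnd ℂ) (U 0 0) * U 0 0 + (starRingEnd ℂ) (U 1 0) * U 1 0 = 1 ∧
    (starRingEnd ℂ) (U 0 0) * U 0 1 + (starRingEnd ℂ) (U 1 0) * U 1 1 = 0 ∧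
    U 1 0 * (starRingEnd ℂ) (U 1 0) + U 1 1 * (starRingEnd ℂ) (U 1 1) = 1 := by
  have h1 : star U * U = 1 := hU.1
  have h2 : U * star U = 1 := hU.2
  refine ⟨?_, ?_, ?_⟩
  · have := congrFun (congrFun h1 0) 0
    simpa [Matrix.mul_apply, Fin.sum_univ_two, Matrix.conjTranspose_apply, Matrix.one_apply] using this
  · have := congrFun (congrFun h1 0) 1
    simpa [Matrix.mul_apply, Fin.sum_univ_two, Matrix.conjTranspose_apply, Matrix.one_apply] using this
  · have := congrFun (congrFun h2 1) 1
    simpa [Matrix.mul_apply, Fin.sum_univ_two, Matrix.conjTranspose_apply, Matrix.one_apply] using this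

lemma dne (U : Matrix (Fin 2) (Fin 2) ℂ) (hU : U ∈ Matrix.unitaryGroup (Fin 2) ℂ)
    (ha : U 0 0 ≠ 0) : U 1 1 ≠ 0 := by
  obtain ⟨r1, r2, r3⟩ := urel U hU
  intro hd
  rw [hd] at r3
  simp at r3
  apply ha
  have : (starRingEnd ℂ) (U 0 0) * U 0 0 = 0 := by
    rw [mul_comm] at r3
    linear_combination r1 - r3
  simpa [mul_eq_zero] using this

lemma step (U : ℤ → Matrix (Fin 2) (Fin 2) ℂ) (ξ : ℂ) (ψ : ℤ → C2)
    (h : IsSol U (Complex.exp (-(Complex.I * ξ))) ψ) (n : ℤ)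
    (hU : U n ∈ Matrix.unitaryGroup (Fin 2) ℂ) (ha : U n 0 0 ≠ 0) :
    (Tmat U ξ n).mulVec ![ψ n 0, ψ (n+1) 1] = ![ψ (n-1) 0, ψ n 1] := by
  obtain ⟨r1, r2, r3⟩ := urel (U n) hU
  have hd := dne (U n) hU ha
  have hsa : (starRingEnd ℂ) (U n 0 0) ≠ 0 := by simpa using ha
  have E1 := comp0 U _ ψ h (n-1)
  have E2 := comp1 U _ ψ h (n+1)
  simp only [sub_add_cancel, add_sub_cancel_right] at E1 E2
  have hμ : Complex.exp (-(Complex.I * ξ)) ≠ 0 := Complex.exp_ne_zero _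
  have hexp : Complex.exp (Complex.I * ξ) * Complex.exp (-(Complex.I * ξ)) = 1 := by
    rw [← Complex.exp_add]; simp
  funext i
  fin_cases i
  · show (Tmat U ξ n).mulVec ![ψ n 0, ψ (n+1) 1] 0 = ψ (n-1) 0
    simp only [Tmat, Matrix.mulVec, dotProduct, Fin.sum_univ_two,
      Matrix.cons_val', Matrix.cons_val_zero, Matrix.cons_val_one, Matrix.head_cons,
      Matrix.empty_val', Matrix.cons_val_fin_one, Matrix.head_fin_const, Matrix.of_apply]
    rw [div_mul_eq_mul_div, div_mul_eq_mul_div, ← add_div, div_eq_iff hsa]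
    linear_combination (Complex.exp (Complex.I * ξ) * (starRingEnd ℂ) (U n 0 0)) * E1
      + (Complex.exp (Complex.I * ξ) * (starRingEnd ℂ) (U n 1 0)) * E2
      - (Complex.exp (Complex.I * ξ) * ψ n 0) * r1
      - (Complex.exp (Complex.I * ξ) * ψ n 1) * r2
      + ((starRingEnd ℂ) (U n 0 0) * ψ (n-1) 0 + (starRingEnd ℂ) (U n 1 0) * ψ (n+1) 1) * hexp
  · show (Tmat U ξ n).mulVec ![ψ n 0, ψ (n+1) 1] 1 = ψ n 1
    simp only [Tmat, Matrix.mulVec, dotProduct, Fin.sum_univ_two,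
      Matrix.cons_val', Matrix.cons_val_zero, Matrix.cons_val_one, Matrix.head_cons,
      Matrix.empty_val', Matrix.cons_val_fin_one, Matrix.head_fin_const, Matrix.of_apply]
    rw [div_mul_eq_mul_div, div_mul_eq_mul_div, ← add_div, div_eq_iff hd]
    linear_combination -E2

lemma prodstep (U : ℤ → Matrix (Fin 2) (Fin 2) ℂ) (ξ : ℂ) (ψ : ℤ → C2)
    (h : IsSol U (Complex.exp (-(Complex.I * ξ))) ψ)
    (hU : CoinsUnitary U) (hA2 : A2 U) (k : ℕ) :
    (((List.range k).map fun j => Tmat U ξ (j : ℤ)).prod).mulVec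
      ![ψ ((k : ℤ) - 1) 0, ψ (k : ℤ) 1] = ![ψ (-1) 0, ψ 0 1] := by
  induction k with
  | zero => simp
  | succ k ih =>
    rw [List.range_succ]
    simp only [List.bind_eq_flatMap, List.flatMap_append, List.flatMap_cons, List.flatMap_nil,
      List.append_nil, List.map_append, List.map_singleton, List.prod_append, List.prod_singleton,
      List.prod_cons, List.prod_nil, mul_one, pure, List.singleton]
    rw [← Matrix.mulVec_mulVec]
    have hk : ((k + 1 : ℕ) : ℤ) - 1 = (k : ℤ) := by push_cast; ring
    have hk2 : ((k + 1 : ℕ) : ℤ) = (k : ℤ) + 1 := by push_cast; ring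
    rw [hk, hk2, step U ξ ψ h (k : ℤ) (hU _) (hA2 _)]
    simpa using ih

/-- `𝒲_{-1}(ψ_out^-, ψ_out^+) = e^{i(n₀+2)ξ} 𝕋₂₂(ξ)`. -/
theorem stmt_4 (n0 : ℕ) (U : ℤ → Matrix (Fin 2) (Fin 2) ℂ)
    (hU : CoinsUnitary U) (hA1 : A1 n0 U) (hA2 : A2 U) (ξ : ℂ)
    (ψm ψp : ℤ → C2) (hm : JostOutMinus U ξ ψm) (hp : JostOutPlus n0 U ξ ψp) :
    Wr ψm ψp (-1) = Complex.exp (Complex.I * ((n0 : ℂ) + 2) * ξ) * TT n0 U ξ 1 1 := by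
  have hμ : Complex.exp (-(Complex.I * ξ)) ≠ 0 := Complex.exp_ne_zero _
  -- boundary values
  have hm1 : ψm (-1) = ![Complex.exp (Complex.I * ξ), 0] := by
    have := hm.2 (-1) le_rfl
    simpa using this
  have hp1 : ψp ((n0 : ℤ) + 1) = ![0, Complex.exp (Complex.I * ((n0 : ℂ) + 1) * ξ)] := by
    have := hp.2 ((n0 : ℤ) + 1) le_rfl
    push_cast at this ⊢
    convert this using 3 <;> ring
  have hp2 : ψp ((n0 : ℤ) + 2) = ![0, Complex.exp (Complex.I * ((n0 : ℂ) + 2) * ξ)] := by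
    have := hp.2 ((n0 : ℤ) + 2) (by linarith)
    push_cast at this ⊢
    convert this using 3 <;> ring
  -- ψm 0 1 = 0 from eq at n = 0
  have hm0 : ψm 0 1 = 0 := by
    have E := comp1 U _ ψm hm.1 0
    have hU1 : U (0 - 1 : ℤ) = 1 := hA1 _ (Or.inl (by norm_num))
    rw [hU1] at E
    have hmm1 : ψm (0 - 1 : ℤ) = ![Complex.exp (Complex.I * ξ), 0] := by
      rw [show (0 - 1 : ℤ) = -1 by ring, hm1]
    rw [hmm1] at E
    simp [Matrix.one_apply] at E
    exact E
  -- ψp n0 0 = 0 from eq at n = n0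
  have hpn0 : ψp (n0 : ℤ) 0 = 0 := by
    have E := comp0 U _ ψp hp.1 (n0 : ℤ)
    have hU1 : U ((n0 : ℤ) + 1) = 1 := hA1 _ (Or.inr (by linarith))
    rw [hU1, hp1] at E
    simp [Matrix.one_apply] at E
    exact E
  -- transfer
  have key := prodstep U ξ ψp hp.1 hU hA2 (n0 + 1)
  have hc1 : ((n0 + 1 : ℕ) : ℤ) - 1 = (n0 : ℤ) := by push_cast; ring
  have hc2 : ((n0 + 1 : ℕ) : ℤ) = (n0 : ℤ) + 1 := by push_cast; ring
  rw [hc1, hc2] at key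
  have key1 := congrFun key 1
  rw [hpn0] at key1
  have hTT : TT n0 U ξ 1 0 * 0 + TT n0 U ξ 1 1 * ψp ((n0:ℤ)+1) 1 = ψp 0 1 := by
    simpa [TT, Matrix.mulVec, dotProduct, Fin.sum_univ_two] using key1
  have hp11 : ψp ((n0:ℤ)+1) 1 = Complex.exp (Complex.I * ((n0 : ℂ) + 1) * ξ) := by
    rw [hp1]; simp
  rw [hp11] at hTT
  simp only [mul_zero, zero_add] at hTT
  -- assemble
  have hWr : Wr ψm ψp (-1) = Complex.exp (Complex.I * ξ) * ψp 0 1 := by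
    unfold Wr
    rw [show (-1 + 1 : ℤ) = 0 from by ring, hm1, hm0]
    simp
  rw [hWr, ← hTT, mul_comm (TT n0 U ξ 1 1), ← mul_assoc, ← Complex.exp_add]
  ring_nf
end
end

section
/- Assume (A1) and (A2), and let ξ ∈ ℝ be real. Then the two outgoing Jost solutions ψ_out^−(·;ξ) and ψ_out^+(·;ξ) are linearly independent, and the 2×2 scattering matrix Σ(ξ), defined by the relation (ψ_in^+(·;ξ), ψ_in^−(·;ξ)) = (ψ_out^−(·;ξ), ψ_out^+(·;ξ)) Σ(ξ) inside the two-dimensional solution space of 𝒰ψ = e^{−iξ}ψ, is a unitary matrix. In particular, writing Σ(ξ) = ((t₋, r₋), (r₊, t₊)), one has |t₋|² + |r₋|² = 1 and |t₊|² + |r₊|² = 1. -/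
open Complex Matrix

noncomputable section

/-! ### Auxiliary machinery for statement 5 -/

section Qw5Aux

variable {U : ℤ → Matrix (Fin 2) (Fin 2) ℂ} {μ : ℂ}

lemma qw5_solA {ψ : ℤ → C2} (h : IsSol U μ ψ) (n : ℤ) :
    U n 0 0 * ψ n 0 + U n 0 1 * ψ n 1 = μ * ψ (n-1) 0 := by
  have h1 := congrFun (h (n-1)) 0
  simp [QWop, Pmat, Qmat, Matrix.mulVec, dotProduct, Fin.sum_univ_two,
    sub_add_cancel] at h1
  linear_combination h1

lemma qw5_solB {ψ : ℤ → C2} (h : IsSol U μ ψ) (n : ℤ) :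
    U n 1 0 * ψ n 0 + U n 1 1 * ψ n 1 = μ * ψ (n+1) 1 := by
  have h1 := congrFun (h (n+1)) 1
  simp [QWop, Pmat, Qmat, Matrix.mulVec, dotProduct, Fin.sum_univ_two,
    add_sub_cancel_right] at h1
  linear_combination h1

lemma qw5_uE (hU : CoinsUnitary U) (n : ℤ) (j k : Fin 2) :
    (starRingEnd ℂ) (U n 0 j) * U n 0 k + (starRingEnd ℂ) (U n 1 j) * U n 1 k
      = if j = k then 1 else 0 := by
  have h1 : star (U n) * U n = 1 := (Unitary.mem_iff.mp (hU n)).1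
  have := congrFun (congrFun h1 j) k
  simpa [Matrix.mul_apply, Matrix.one_apply, Fin.sum_univ_two, Matrix.star_apply] using this

lemma qw5_uRow (hU : CoinsUnitary U) (n : ℤ) (j k : Fin 2) :
    U n j 0 * (starRingEnd ℂ) (U n k 0) + U n j 1 * (starRingEnd ℂ) (U n k 1)
      = if j = k then 1 else 0 := by
  have h1 : U n * star (U n) = 1 := (Unitary.mem_iff.mp (hU n)).2
  have := congrFun (congrFun h1 j) k
  simpa [Matrix.mul_apply, Matrix.one_apply, Fin.sum_univ_two, Matrix.star_apply] using this

lemma qw5_dne (hU : CoinsUnitary U) (hA2 : A2 U) (n : ℤ) : U n 1 1 ≠ 0 := by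
  intro hd
  have e1 := qw5_uE hU n 1 1
  have e2 := qw5_uRow hU n 0 0
  simp at e1 e2
  apply hA2 n
  have h0 : U n 0 0 * (starRingEnd ℂ) (U n 0 0) = 0 := by
    linear_combination e2 - e1 + (starRingEnd ℂ) (U n 1 1) * hd
  rcases mul_eq_zero.mp h0 with h | h
  · exact h
  · exact (map_eq_zero _).mp h

/-- the conserved current -/
def Jc (φ ψ : ℤ → C2) (n : ℤ) : ℂ :=
  (starRingEnd ℂ) (φ n 0) * ψ n 0 - (starRingEnd ℂ) (φ (n+1) 1) * ψ (n+1) 1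

lemma qw5_Jconj (φ ψ : ℤ → C2) (n : ℤ) : Jc φ ψ n = (starRingEnd ℂ) (Jc ψ φ n) := by
  simp [Jc, map_sub, _root_.map_mul]; ring

lemma qw5_exp_unit (z : ℂ) (hz : (starRingEnd ℂ) z = -z) :
    (starRingEnd ℂ) (Complex.exp z) * Complex.exp z = 1 := by
  rw [← Complex.exp_conj, hz, ← Complex.exp_add]; simp

lemma qw5_Jstep {φ ψ : ℤ → C2}
    (hU : CoinsUnitary U) (hμ : (starRingEnd ℂ) μ * μ = 1)
    (hφ : IsSol U μ φ) (hψ : IsSol U μ ψ) (n : ℤ) :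
    Jc φ ψ n = Jc φ ψ (n-1) := by
  have hAφ := qw5_solA hφ n
  have hAψ := qw5_solA hψ n
  have hBφ := qw5_solB hφ n
  have hBψ := qw5_solB hψ n
  have cAφ := congrArg (starRingEnd ℂ) hAφ
  have cBφ := congrArg (starRingEnd ℂ) hBφ
  simp only [map_add, _root_.map_mul] at cAφ cBφ
  have E00 := qw5_uE hU n 0 0
  have E01 := qw5_uE hU n 0 1
  have E10 := qw5_uE hU n 1 0
  have E11 := qw5_uE hU n 1 1
  simp only [if_pos rfl, if_true, reduceIte] at E00 E01 E10 E11
  simp only [show ((0:Fin 2) = 1) = False by simp, show ((1:Fin 2) = 0) = False by simp,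
    if_false] at E01 E10
  simp only [Jc, sub_add_cancel]
  linear_combination
    ((starRingEnd ℂ) (U n 0 0) * (starRingEnd ℂ) (φ n 0)
      + (starRingEnd ℂ) (U n 0 1) * (starRingEnd ℂ) (φ n 1)) * hAψ
    + (μ * ψ (n-1) 0) * cAφ
    + ((starRingEnd ℂ) (U n 1 0) * (starRingEnd ℂ) (φ n 0)
      + (starRingEnd ℂ) (U n 1 1) * (starRingEnd ℂ) (φ n 1)) * hBψ
    + (μ * ψ (n+1) 1) * cBφ
    + ((starRingEnd ℂ) (φ (n-1) 0) * ψ (n-1) 0 + (starRingEnd ℂ) (φ (n+1) 1) * ψ (n+1) 1) * hμ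
    - ((starRingEnd ℂ) (φ n 0) * ψ n 0) * E00
    - ((starRingEnd ℂ) (φ n 0) * ψ n 1) * E01
    - ((starRingEnd ℂ) (φ n 1) * ψ n 0) * E10
    - ((starRingEnd ℂ) (φ n 1) * ψ n 1) * E11

lemma qw5_Jconst_of_step {φ ψ : ℤ → C2}
    (hstep : ∀ n : ℤ, Jc φ ψ n = Jc φ ψ (n-1)) : ∀ n m : ℤ, Jc φ ψ n = Jc φ ψ m := by
  have key : ∀ n : ℤ, Jc φ ψ n = Jc φ ψ 0 := by
    intro n
    induction n using Int.induction_on with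
    | zero => rfl
    | succ k ih =>
        have := hstep ((k:ℤ)+1)
        rw [show ((k:ℤ)+1) - 1 = (k:ℤ) by ring] at this
        rw [this]; exact ih
    | pred k ih =>
        have := hstep (-(k:ℤ))
        rw [show (-(k:ℤ)) - 1 = -(k:ℤ)-1 by ring] at this
        rw [← this]; exact ih
  intro n m; rw [key n, key m]

lemma qw5_QWop_lin (U : ℤ → Matrix (Fin 2) (Fin 2) ℂ) (a b : ℂ) (φ ψ : ℤ → C2) (n : ℤ) :
    QWop U (fun m => a • φ m + b • ψ m) n = a • QWop U φ n + b • QWop U ψ n := by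
  simp only [QWop, Matrix.mulVec_add, Matrix.mulVec_smul]
  module

lemma qw5_comb {φ ψ : ℤ → C2} (a b : ℂ)
    (hφ : IsSol U μ φ) (hψ : IsSol U μ ψ) : IsSol U μ (fun m => a • φ m + b • ψ m) := by
  intro n
  rw [qw5_QWop_lin, hφ n, hψ n]
  module

lemma qw5_zero_sol : IsSol U μ (fun _ => (0 : C2)) := by
  intro n
  simp [QWop, Matrix.mulVec_zero]

lemma qw5_unique (hU : CoinsUnitary U) (hA2 : A2 U) (hμ0 : μ ≠ 0)
    {φ ψ : ℤ → C2} (hφ : IsSol U μ φ) (hψ : IsSol U μ ψ)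
    (h00 : φ 0 0 = ψ 0 0) (h01 : φ 0 1 = ψ 0 1) :
    ∀ n : ℤ, φ n = ψ n := by
  have key : ∀ n : ℤ, φ n 0 = ψ n 0 ∧ φ n 1 = ψ n 1 := by
    intro n
    induction n using Int.induction_on with
    | zero => exact ⟨h00, h01⟩
    | succ k ih =>
        have e1 : φ ((k:ℤ)+1) 1 = ψ ((k:ℤ)+1) 1 := by
          have a1 := qw5_solB hφ (k:ℤ)
          have a2 := qw5_solB hψ (k:ℤ)
          have h := mul_left_cancel₀ hμ0 (a1.symm.trans (by rw [ih.1, ih.2]; exact a2))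
          exact h
        have e0 : φ ((k:ℤ)+1) 0 = ψ ((k:ℤ)+1) 0 := by
          have a1 := qw5_solA hφ ((k:ℤ)+1)
          have a2 := qw5_solA hψ ((k:ℤ)+1)
          rw [show ((k:ℤ)+1-1) = (k:ℤ) by ring] at a1 a2
          refine mul_left_cancel₀ (hA2 ((k:ℤ)+1)) ?_
          linear_combination a1 - a2 - U ((k:ℤ)+1) 0 1 * e1 + μ * ih.1
        exact ⟨e0, e1⟩
    | pred k ih =>
        have e0 : φ (-(k:ℤ)-1) 0 = ψ (-(k:ℤ)-1) 0 := by
          have a1 := qw5_solA hφ (-(k:ℤ))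
          have a2 := qw5_solA hψ (-(k:ℤ))
          refine mul_left_cancel₀ hμ0 ?_
          rw [← a1, ← a2, ih.1, ih.2]
        have e1 : φ (-(k:ℤ)-1) 1 = ψ (-(k:ℤ)-1) 1 := by
          have a1 := qw5_solB hφ (-(k:ℤ)-1)
          have a2 := qw5_solB hψ (-(k:ℤ)-1)
          rw [show (-(k:ℤ)-1+1) = -(k:ℤ) by ring] at a1 a2
          refine mul_left_cancel₀ (qw5_dne hU hA2 (-(k:ℤ)-1)) ?_
          linear_combination a1 - a2 - U (-(k:ℤ)-1) 1 0 * e0 + μ * ih.2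
        exact ⟨e0, e1⟩
  intro n
  funext i
  fin_cases i
  · exact (key n).1
  · exact (key n).2

lemma qw5_Jc_expandL {χ φ ψ : ℤ → C2} {a b : ℂ}
    (h : ∀ n i, χ n i = a * φ n i + b * ψ n i) (η : ℤ → C2) (n : ℤ) :
    Jc χ η n = (starRingEnd ℂ) a * Jc φ η n + (starRingEnd ℂ) b * Jc ψ η n := by
  have h1 := congrArg (starRingEnd ℂ) (h n 0)
  have h2 := congrArg (starRingEnd ℂ) (h (n+1) 1)
  simp only [map_add, _root_.map_mul] at h1 h2
  simp only [Jc]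
  linear_combination (η n 0) * h1 - (η (n+1) 1) * h2

lemma qw5_Jc_expandR {χ φ ψ : ℤ → C2} {a b : ℂ}
    (h : ∀ n i, χ n i = a * φ n i + b * ψ n i) (η : ℤ → C2) (n : ℤ) :
    Jc η χ n = a * Jc η φ n + b * Jc η ψ n := by
  simp only [Jc]
  linear_combination (starRingEnd ℂ) (η n 0) * (h n 0) - (starRingEnd ℂ) (η (n+1) 1) * (h (n+1) 1)

lemma qw5_conj_mul (c : ℤ) (ξ : ℝ) :
    (starRingEnd ℂ) (Complex.I * (c:ℂ) * (ξ:ℂ)) = -(Complex.I * (c:ℂ) * (ξ:ℂ)) := by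
  rw [_root_.map_mul, _root_.map_mul, Complex.conj_I, Complex.conj_ofReal, map_intCast]
  ring

lemma qw5_unitP (c : ℤ) (ξ : ℝ) :
    (starRingEnd ℂ) (Complex.exp (Complex.I * (c:ℂ) * (ξ:ℂ))) *
      Complex.exp (Complex.I * (c:ℂ) * (ξ:ℂ)) = 1 :=
  qw5_exp_unit _ (qw5_conj_mul c ξ)

lemma qw5_unitM (c : ℤ) (ξ : ℝ) :
    (starRingEnd ℂ) (Complex.exp (-(Complex.I * (c:ℂ) * (ξ:ℂ)))) *
      Complex.exp (-(Complex.I * (c:ℂ) * (ξ:ℂ))) = 1 :=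
  qw5_exp_unit _ (by rw [map_neg, qw5_conj_mul])

end Qw5Aux
/-- for real `ξ` the outgoing Jost solutions are linearly
independent and the scattering matrix defined by them is unitary. -/
theorem stmt_5 (n0 : ℕ) (U : ℤ → Matrix (Fin 2) (Fin 2) ℂ)
    (hU : CoinsUnitary U) (hA1 : A1 n0 U) (hA2 : A2 U) (ξ : ℝ)
    (ψom ψop ψim ψip : ℤ → C2)
    (hom : JostOutMinus U (ξ : ℂ) ψom) (hop : JostOutPlus n0 U (ξ : ℂ) ψop)
    (him : JostInMinus U (ξ : ℂ) ψim) (hip : JostInPlus n0 U (ξ : ℂ) ψip) :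
    (∀ a b : ℂ, a • ψom + b • ψop = 0 → a = 0 ∧ b = 0) ∧
    (∃ S : Matrix (Fin 2) (Fin 2) ℂ,
      ∀ n : ℤ, ψip n = S 0 0 • ψom n + S 1 0 • ψop n ∧
               ψim n = S 0 1 • ψom n + S 1 1 • ψop n) ∧
    ∀ S : Matrix (Fin 2) (Fin 2) ℂ,
      (∀ n : ℤ, ψip n = S 0 0 • ψom n + S 1 0 • ψop n ∧
                ψim n = S 0 1 • ψom n + S 1 1 • ψop n) →
      S ∈ Matrix.unitaryGroup (Fin 2) ℂ ∧
      ‖S 0 0‖ ^ 2 + ‖S 0 1‖ ^ 2 = 1 ∧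
      ‖S 1 1‖ ^ 2 + ‖S 1 0‖ ^ 2 = 1 := by
  classical
  set μ : ℂ := Complex.exp (-(Complex.I * (ξ:ℂ))) with hμdef
  have hμ0 : μ ≠ 0 := Complex.exp_ne_zero _
  have hμ1 : (starRingEnd ℂ) μ * μ = 1 :=
    qw5_exp_unit _ (by simp [map_neg, _root_.map_mul, Complex.conj_I, Complex.conj_ofReal])
  have hsom : IsSol U μ ψom := hom.1
  have hsop : IsSol U μ ψop := hop.1
  have hsim : IsSol U μ ψim := him.1
  have hsip : IsSol U μ ψip := hip.1
  have hconst : ∀ {f g : ℤ → C2}, IsSol U μ f → IsSol U μ g →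
      ∀ n m : ℤ, Jc f g n = Jc f g m :=
    fun hf hg => qw5_Jconst_of_step (fun n => qw5_Jstep hU hμ1 hf hg n)
  -- boundary values of the current
  have Jomom : Jc ψom ψom (-2) = 1 := by
    simp only [Jc, show (-2:ℤ)+1 = -1 from by norm_num]
    rw [hom.2 (-2) (by norm_num), hom.2 (-1) (by norm_num)]
    simp only [Matrix.cons_val_zero, Matrix.cons_val_one, Matrix.head_cons, map_zero,
      zero_mul, mul_zero, sub_zero]
    linear_combination qw5_unitM (-2) ξ
  have Jimim : Jc ψim ψim (-2) = -1 := by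
    simp only [Jc, show (-2:ℤ)+1 = -1 from by norm_num]
    rw [him.2 (-2) (by norm_num), him.2 (-1) (by norm_num)]
    simp only [Matrix.cons_val_zero, Matrix.cons_val_one, Matrix.head_cons, map_zero,
      zero_mul, mul_zero, zero_sub]
    linear_combination -qw5_unitP (-1) ξ
  have Jomim : Jc ψom ψim (-2) = 0 := by
    simp only [Jc, show (-2:ℤ)+1 = -1 from by norm_num]
    rw [hom.2 (-2) (by norm_num), hom.2 (-1) (by norm_num),
      him.2 (-2) (by norm_num), him.2 (-1) (by norm_num)]
    simp
  have Jopop : Jc ψop ψop ((n0:ℤ)+1) = -1 := by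
    simp only [Jc]
    rw [hop.2 ((n0:ℤ)+1) le_rfl, hop.2 ((n0:ℤ)+1+1) (by linarith)]
    simp only [Matrix.cons_val_zero, Matrix.cons_val_one, Matrix.head_cons, map_zero,
      zero_mul, mul_zero, zero_sub]
    linear_combination -qw5_unitP ((n0:ℤ)+1+1) ξ
  have Jipip : Jc ψip ψip ((n0:ℤ)+1) = 1 := by
    simp only [Jc]
    rw [hip.2 ((n0:ℤ)+1) le_rfl, hip.2 ((n0:ℤ)+1+1) (by linarith)]
    simp only [Matrix.cons_val_zero, Matrix.cons_val_one, Matrix.head_cons, map_zero,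
      zero_mul, mul_zero, sub_zero]
    linear_combination qw5_unitM ((n0:ℤ)+1) ξ
  have Jipop : Jc ψip ψop ((n0:ℤ)+1) = 0 := by
    simp only [Jc]
    rw [hip.2 ((n0:ℤ)+1) le_rfl, hip.2 ((n0:ℤ)+1+1) (by linarith),
      hop.2 ((n0:ℤ)+1) le_rfl, hop.2 ((n0:ℤ)+1+1) (by linarith)]
    simp
  set A : ℂ := Jc ψom ψop (-2) with hA
  have hAp : Jc ψom ψop ((n0:ℤ)+1) = A := by
    rw [hA]; exact hconst hsom hsop _ _
  have hApos : (1:ℂ) + (starRingEnd ℂ) A * A ≠ 0 := by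
    have h1 : (starRingEnd ℂ) A * A = (Complex.normSq A : ℂ) := by
      rw [mul_comm, Complex.mul_conj]
    rw [h1]
    intro h
    have h2 := congrArg Complex.re h
    simp at h2
    nlinarith [Complex.normSq_nonneg A, h2]
  -- Part 1 : linear independence
  have part1 : ∀ a b : ℂ, a • ψom + b • ψop = 0 → a = 0 ∧ b = 0 := by
    intro a b hab
    have habn : ∀ n : ℤ, ∀ i : Fin 2, a * ψom n i + b * ψop n i = 0 := by
      intro n i
      have := congrFun (congrFun hab n) i
      simpa [Pi.smul_apply, smul_eq_mul] using this
    have hJ : ∀ (η : ℤ → C2) (n : ℤ), a * Jc η ψom n + b * Jc η ψop n = 0 := by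
      intro η n
      have h1 := habn n 0
      have h2 := habn (n+1) 1
      simp only [Jc]
      linear_combination (starRingEnd ℂ) (η n 0) * h1 - (starRingEnd ℂ) (η (n+1) 1) * h2
    have e1 : a + b * A = 0 := by
      have h := hJ ψom (-2)
      rw [Jomom, ← hA] at h
      linear_combination h
    have e2 : a * (starRingEnd ℂ) A - b = 0 := by
      have h := hJ ψop ((n0:ℤ)+1)
      have hco : Jc ψop ψom ((n0:ℤ)+1) = (starRingEnd ℂ) A := by
        rw [qw5_Jconj, hAp]
      rw [hco, Jopop] at h
      linear_combination h
    have ha : a = 0 := by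
      have h : a * (1 + (starRingEnd ℂ) A * A) = 0 := by
        linear_combination e1 + A * e2
      rcases mul_eq_zero.mp h with h | h
      · exact h
      · exact absurd h hApos
    exact ⟨ha, by rw [ha] at e2; linear_combination -e2⟩
  refine ⟨part1, ?_, ?_⟩
  · -- Part 2 : existence of the scattering matrix
    have vanish : ∀ a b : ℂ, (∀ i : Fin 2, a * ψom 0 i + b * ψop 0 i = 0) → a = 0 ∧ b = 0 := by
      intro a b h0
      apply part1
      have hcomb := qw5_comb (U := U) (μ := μ) a b hsom hsop
      have hzz := qw5_unique hU hA2 hμ0 hcomb (qw5_zero_sol (U := U) (μ := μ))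
        (by simpa using h0 0) (by simpa using h0 1)
      funext n i
      have := congrFun (hzz n) i
      simpa [Pi.smul_apply, smul_eq_mul] using this
    have hDne : ψom 0 0 * ψop 0 1 - ψop 0 0 * ψom 0 1 ≠ 0 := by
      intro hD0
      have h1 := vanish (ψop 0 1) (-(ψom 0 1)) (by
        intro i
        fin_cases i
        · show ψop 0 1 * ψom 0 0 + -(ψom 0 1) * ψop 0 0 = 0
          linear_combination hD0
        · show ψop 0 1 * ψom 0 1 + -(ψom 0 1) * ψop 0 1 = 0
          ring)
      have h2 := vanish (ψop 0 0) (-(ψom 0 0)) (by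
        intro i
        fin_cases i
        · show ψop 0 0 * ψom 0 0 + -(ψom 0 0) * ψop 0 0 = 0
          ring
        · show ψop 0 0 * ψom 0 1 + -(ψom 0 0) * ψop 0 1 = 0
          linear_combination -hD0)
      have h3 := vanish 1 0 (by
        intro i
        fin_cases i
        · simpa using neg_eq_zero.mp h2.2
        · simpa using neg_eq_zero.mp h1.2)
      exact one_ne_zero h3.1
    set D : ℂ := ψom 0 0 * ψop 0 1 - ψop 0 0 * ψom 0 1 with hD
    refine ⟨!![(ψip 0 0 * ψop 0 1 - ψop 0 0 * ψip 0 1) / D,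
               (ψim 0 0 * ψop 0 1 - ψop 0 0 * ψim 0 1) / D;
               (ψom 0 0 * ψip 0 1 - ψip 0 0 * ψom 0 1) / D,
               (ψom 0 0 * ψim 0 1 - ψim 0 0 * ψom 0 1) / D], fun n => ⟨?_, ?_⟩⟩
    · have hcomb := qw5_comb (U := U) (μ := μ)
        ((ψip 0 0 * ψop 0 1 - ψop 0 0 * ψip 0 1) / D)
        ((ψom 0 0 * ψip 0 1 - ψip 0 0 * ψom 0 1) / D) hsom hsop
      have h := qw5_unique hU hA2 hμ0 hsip hcomb
        (by simp only [Pi.add_apply, Pi.smul_apply, smul_eq_mul]; field_simp; ring) (by simp only [Pi.add_apply, Pi.smul_apply, smul_eq_mul]; field_simp; ring) n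
      simpa using h
    · have hcomb := qw5_comb (U := U) (μ := μ)
        ((ψim 0 0 * ψop 0 1 - ψop 0 0 * ψim 0 1) / D)
        ((ψom 0 0 * ψim 0 1 - ψim 0 0 * ψom 0 1) / D) hsom hsop
      have h := qw5_unique hU hA2 hμ0 hsim hcomb
        (by simp only [Pi.add_apply, Pi.smul_apply, smul_eq_mul]; field_simp; ring) (by simp only [Pi.add_apply, Pi.smul_apply, smul_eq_mul]; field_simp; ring) n
      simpa using h
  · -- Part 3 : unitarity
    intro S hS
    have hipn : ∀ n : ℤ, ∀ i : Fin 2, ψip n i = S 0 0 * ψom n i + S 1 0 * ψop n i := by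
      intro n i
      have := congrFun ((hS n).1) i
      simpa [Pi.smul_apply, smul_eq_mul] using this
    have himn : ∀ n : ℤ, ∀ i : Fin 2, ψim n i = S 0 1 * ψom n i + S 1 1 * ψop n i := by
      intro n i
      have := congrFun ((hS n).2) i
      simpa [Pi.smul_apply, smul_eq_mul] using this
    have R1 : (starRingEnd ℂ) (S 0 0) * A - (starRingEnd ℂ) (S 1 0) = 0 := by
      have hexp := qw5_Jc_expandL hipn ψop ((n0:ℤ)+1)
      rw [Jipop, hAp, Jopop] at hexp
      linear_combination -hexp
    have R1c : S 1 0 = S 0 0 * (starRingEnd ℂ) A := by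
      have h := congrArg (starRingEnd ℂ) R1
      simp only [map_sub, _root_.map_mul, Complex.conj_conj, map_zero] at h
      linear_combination -h
    have R2 : S 0 1 + S 1 1 * A = 0 := by
      have hexp := qw5_Jc_expandR himn ψom (-2)
      rw [Jomim, Jomom, ← hA] at hexp
      linear_combination -hexp
    have R2c : (starRingEnd ℂ) (S 0 1) + (starRingEnd ℂ) (S 1 1) * (starRingEnd ℂ) A = 0 := by
      have h := congrArg (starRingEnd ℂ) R2
      simpa only [map_add, _root_.map_mul, map_zero] using h
    have R3 : (starRingEnd ℂ) (S 0 0) * (S 0 0 * 1 + S 1 0 * A)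
        + (starRingEnd ℂ) (S 1 0) * (S 0 0 * (starRingEnd ℂ) A + S 1 0 * (-1)) = 1 := by
      have e1 := qw5_Jc_expandL hipn ψip ((n0:ℤ)+1)
      have e2 := qw5_Jc_expandR hipn ψom ((n0:ℤ)+1)
      have e3 := qw5_Jc_expandR hipn ψop ((n0:ℤ)+1)
      have e4 : Jc ψop ψom ((n0:ℤ)+1) = (starRingEnd ℂ) A := by rw [qw5_Jconj, hAp]
      have e5 : Jc ψom ψom ((n0:ℤ)+1) = 1 := (hconst hsom hsom _ (-2)).trans Jomom
      rw [Jipip, e2, e3, e4, e5, hAp, Jopop] at e1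
      linear_combination -e1
    have R4 : (starRingEnd ℂ) (S 0 1) * (S 0 1 * 1 + S 1 1 * A)
        + (starRingEnd ℂ) (S 1 1) * (S 0 1 * (starRingEnd ℂ) A + S 1 1 * (-1)) = -1 := by
      have e1 := qw5_Jc_expandL himn ψim (-2)
      have e2 := qw5_Jc_expandR himn ψom (-2)
      have e3 := qw5_Jc_expandR himn ψop (-2)
      have e4 : Jc ψop ψom (-2) = (starRingEnd ℂ) A := by rw [qw5_Jconj, ← hA]
      have e5 : Jc ψop ψop (-2) = -1 := (hconst hsop hsop _ ((n0:ℤ)+1)).trans Jopop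
      rw [Jimim, e2, e3, e4, e5, Jomom, ← hA] at e1
      linear_combination -e1
    have g1 : (starRingEnd ℂ) (S 0 0) * S 0 0 + (starRingEnd ℂ) (S 1 0) * S 1 0 = 1 := by
      linear_combination R3 - S 1 0 * R1 + (starRingEnd ℂ) (S 1 0) * R1c
    have g2 : (starRingEnd ℂ) (S 1 1) * S 1 1 + (starRingEnd ℂ) (S 0 1) * S 0 1 = 1 := by
      linear_combination -R4 + (starRingEnd ℂ) (S 0 1) * R2 + S 0 1 * R2c
    have g3 : (starRingEnd ℂ) (S 0 0) * S 0 1 + (starRingEnd ℂ) (S 1 0) * S 1 1 = 0 := by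
      linear_combination (starRingEnd ℂ) (S 0 0) * R2 - S 1 1 * R1
    have g3c : S 0 0 * (starRingEnd ℂ) (S 0 1) + S 1 0 * (starRingEnd ℂ) (S 1 1) = 0 := by
      have h := congrArg (starRingEnd ℂ) g3
      simp only [map_add, _root_.map_mul, Complex.conj_conj, map_zero] at h
      linear_combination h
    have hstar : star S * S = 1 := by
      ext i j
      fin_cases i <;> fin_cases j <;>
        simp only [Matrix.mul_apply, Fin.sum_univ_two, Matrix.star_apply, Matrix.one_apply,
          RCLike.star_def, Fin.zero_eta, Fin.mk_one, if_true, reduceIte]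
      · simpa using g1
      · simpa using g3
      · have h := congrArg (starRingEnd ℂ) g3
        simp only [map_add, _root_.map_mul, Complex.conj_conj, map_zero] at h
        simpa using (by linear_combination h :
          (starRingEnd ℂ) (S 0 1) * S 0 0 + (starRingEnd ℂ) (S 1 1) * S 1 0 = 0)
      · simpa using (by linear_combination g2 :
          (starRingEnd ℂ) (S 0 1) * S 0 1 + (starRingEnd ℂ) (S 1 1) * S 1 1 = 1)
    have hrow : S * star S = 1 := mul_eq_one_comm.mp hstar
    have hmem : S ∈ Matrix.unitaryGroup (Fin 2) ℂ := by
      rw [Matrix.mem_unitaryGroup_iff]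
      exact hrow
    refine ⟨hmem, ?_, ?_⟩
    · have h00 := congrFun (congrFun hrow 0) 0
      simp only [Matrix.mul_apply, Fin.sum_univ_two, Matrix.star_apply, Matrix.one_apply,
        RCLike.star_def, if_true, reduceIte] at h00
      rw [Complex.sq_norm, Complex.sq_norm]
      have hc : ((Complex.normSq (S 0 0) + Complex.normSq (S 0 1) : ℝ) : ℂ) = 1 := by
        push_cast
        rw [← Complex.mul_conj, ← Complex.mul_conj]
        linear_combination h00
      exact_mod_cast hc
    · have h11 := congrFun (congrFun hrow 1) 1
      simp only [Matrix.mul_apply, Fin.sum_univ_two, Matrix.star_apply, Matrix.one_apply,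
        RCLike.star_def, if_true, reduceIte] at h11
      rw [Complex.sq_norm, Complex.sq_norm]
      have hc : ((Complex.normSq (S 1 1) + Complex.normSq (S 1 0) : ℝ) : ℂ) = 1 := by
        push_cast
        rw [← Complex.mul_conj, ← Complex.mul_conj]
        linear_combination h11
      exact_mod_cast hc
end
end
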